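/- arXiv:2011.01078 — 11 statements merged into one kernel-verified Lean document; each statement's English description precedes it below -/
import Mathlib

section
/- For integers m, n with m even, m ≥ 2, and n odd, n ≥ 3, the maximum size of an independent set in the graph on (ZMod m) × (ZMod n) where (i,j) is adjacent to (i+1,j) and (i,j+1) equals m(n-1)/2. -/
/-- Adjacency in the underlying (toroidal grid) graph of `C_m □ C_n`:
two vertices are joined iff they differ by `(±1,0)` or `(0,±1)`. -/
def Adj {m n : ℕ} (u v : ZMod m × ZMod n) : Prop :=
  v = u + (1, 0) ∨ v = u + (0, 1) ∨ u = v + (1, 0) ∨ u = v + (0, 1)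

/-- A set of vertices is independent if no two of its members are adjacent. -/
def Indep {m n : ℕ} (S : Finset (ZMod m × ZMod n)) : Prop :=
  ∀ u ∈ S, ∀ v ∈ S, ¬ Adj u v

/-- An Italian dominating function on the digraph `C_m □ C_n`
(arcs `(i,j) → (i+1,j)` and `(i,j) → (i,j+1)`): every vertex assigned `0`
has in-neighbour values summing to at least `2`. -/
def ItalianDF {m n : ℕ} (f : ZMod m × ZMod n → ℕ) : Prop :=
  (∀ v, f v ≤ 2) ∧ ∀ v, f v = 0 → 2 ≤ f (v.1 - 1, v.2) + f (v.1, v.2 - 1)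

/-- The set of weights of Italian dominating functions on `C_m □ C_n`. -/
def weights (m n : ℕ) [NeZero m] [NeZero n] : Set ℕ :=
  {w | ∃ f : ZMod m × ZMod n → ℕ, ItalianDF f ∧ ∑ v, f v = w}

theorem stmt1 (m n : ℕ) [NeZero m] [NeZero n] (hm : 2 ≤ m) (hn : 3 ≤ n)
    (hme : Even m) (hno : Odd n) :
    IsGreatest {k : ℕ | ∃ S : Finset (ZMod m × ZMod n), Indep S ∧ S.card = k}
      (m * (n - 1) / 2) := by
  classical
  haveI : Fact (1 < m) := ⟨hm⟩
  haveI : Fact (1 < n) := ⟨by omega⟩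
  have hm2 : m % 2 = 0 := Nat.even_iff.mp hme
  have hn2 : n % 2 = 1 := Nat.odd_iff.mp hno
  constructor
  · -- a large independent set exists
    refine ⟨Finset.univ.filter
      (fun p : ZMod m × ZMod n => p.2.val < n - 1 ∧ (p.1.val + p.2.val) % 2 = 0), ?_, ?_⟩
    · -- independence
      have key1 : ∀ a : ZMod m, ∀ b : ZMod n, ∀ c : ZMod m, ∀ d : ZMod n,
          b.val < n - 1 → (a.val + b.val) % 2 = 0 →
          d.val < n - 1 → (c.val + d.val) % 2 = 0 →
          (c, d) = (a, b) + ((1 : ZMod m), (0 : ZMod n)) → False := by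
        intro a b c d _ ha2 _ hc2 h
        rw [Prod.ext_iff] at h
        obtain ⟨h1, h2⟩ := h
        simp only [Prod.fst_add, Prod.snd_add, add_zero] at h1 h2
        subst h1 h2
        have hva : a.val < m := a.val_lt
        have hv : (a + 1).val = (a.val + 1) % m := by
          rw [ZMod.val_add, ZMod.val_one]
        rcases Nat.lt_or_ge (a.val + 1) m with h' | h'
        · rw [Nat.mod_eq_of_lt h'] at hv
          omega
        · have : a.val + 1 = m := by omega
          rw [this, Nat.mod_self] at hv
          omega
      have key2 : ∀ a : ZMod m, ∀ b : ZMod n, ∀ c : ZMod m, ∀ d : ZMod n,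
          b.val < n - 1 → (a.val + b.val) % 2 = 0 →
          d.val < n - 1 → (c.val + d.val) % 2 = 0 →
          (c, d) = (a, b) + ((0 : ZMod m), (1 : ZMod n)) → False := by
        intro a b c d hb1 ha2 _ hc2 h
        rw [Prod.ext_iff] at h
        obtain ⟨h1, h2⟩ := h
        simp only [Prod.fst_add, Prod.snd_add, add_zero] at h1 h2
        subst h1 h2
        have hv : (b + 1).val = (b.val + 1) % n := by
          rw [ZMod.val_add, ZMod.val_one]
        rw [Nat.mod_eq_of_lt (by omega)] at hv
        omega
      rintro ⟨a, b⟩ hu ⟨c, d⟩ hv hadj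
      simp only [Finset.mem_filter] at hu hv
      obtain ⟨-, hb1, ha2⟩ := hu
      obtain ⟨-, hd1, hc2⟩ := hv
      rcases hadj with h | h | h | h
      · exact key1 a b c d hb1 ha2 hd1 hc2 h
      · exact key2 a b c d hb1 ha2 hd1 hc2 h
      · exact key1 c d a b hd1 hc2 hb1 ha2 h
      · exact key2 c d a b hd1 hc2 hb1 ha2 h
    · -- cardinality
      have hcard : (Finset.univ.filter
          (fun p : ZMod m × ZMod n => p.2.val < n - 1 ∧ (p.1.val + p.2.val) % 2 = 0)).card
          = (Finset.univ : Finset (Fin (m / 2) × Fin (n - 1))).card := by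
        apply Finset.card_nbij'
          (i := fun p => (⟨p.1.val / 2, by have := p.1.val_lt; omega⟩,
            ⟨min p.2.val (n - 2), by omega⟩))
          (j := fun q => (((2 * q.1.val + q.2.val % 2 : ℕ) : ZMod m),
            ((q.2.val : ℕ) : ZMod n)))
        · intro p _; exact Finset.mem_univ _
        · rintro ⟨q1, q2⟩ -
          have hq1 := q1.isLt
          have hq2 := q2.isLt
          have hv1 : ((2 * q1.val + q2.val % 2 : ℕ) : ZMod m).val
              = 2 * q1.val + q2.val % 2 := ZMod.val_cast_of_lt (by omega)
          have hv2 : ((q2.val : ℕ) : ZMod n).val = q2.val :=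
            ZMod.val_cast_of_lt (by omega)
          simp only [Finset.mem_coe, Finset.mem_filter, Finset.mem_univ, true_and]
          rw [hv1, hv2]
          omega
        · rintro ⟨a, b⟩ hp
          simp only [Finset.mem_coe, Finset.mem_filter, Finset.mem_univ, true_and] at hp
          obtain ⟨hb1, hab⟩ := hp
          have hva := a.val_lt
          have hvb := b.val_lt
          simp only
          have e1 : min b.val (n - 2) = b.val := by omega
          have e2 : 2 * (a.val / 2) + (min b.val (n - 2)) % 2 = a.val := by omega
          refine Prod.ext ?_ ?_
          · show ((2 * (a.val / 2) + (min b.val (n - 2)) % 2 : ℕ) : ZMod m) = a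
            rw [e2, ZMod.natCast_val, ZMod.cast_id]
          · show ((min b.val (n - 2) : ℕ) : ZMod n) = b
            rw [e1, ZMod.natCast_val, ZMod.cast_id]
        · rintro ⟨q1, q2⟩ -
          have hq1 := q1.isLt
          have hq2 := q2.isLt
          have hv1 : ((2 * q1.val + q2.val % 2 : ℕ) : ZMod m).val
              = 2 * q1.val + q2.val % 2 := ZMod.val_cast_of_lt (by omega)
          have hv2 : ((q2.val : ℕ) : ZMod n).val = q2.val :=
            ZMod.val_cast_of_lt (by omega)
          refine Prod.ext ?_ ?_
          · apply Fin.ext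
            show ((2 * q1.val + q2.val % 2 : ℕ) : ZMod m).val / 2 = q1.val
            rw [hv1]; omega
          · apply Fin.ext
            show min ((q2.val : ℕ) : ZMod n).val (n - 2) = q2.val
            rw [hv2]; omega
      rw [hcard]
      simp only [Finset.card_univ, Fintype.card_prod, Fintype.card_fin]
      obtain ⟨t, ht⟩ := hme
      have h1 : m / 2 = t := by omega
      have h2 : m * (n - 1) = 2 * (t * (n - 1)) := by subst ht; ring
      rw [h1, h2, Nat.mul_div_cancel_left _ (by norm_num)]
  · -- upper bound
    rintro k ⟨S, hS, rfl⟩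
    set T : ZMod m → Finset (ZMod n) :=
      fun i => Finset.univ.filter (fun j => (i, j) ∈ S) with hT
    have hrow : ∀ i, 2 * (T i).card ≤ n - 1 := by
      intro i
      have hdisj : Disjoint (T i) ((T i).image (· + 1)) := by
        rw [Finset.disjoint_left]
        intro j hj hj'
        obtain ⟨j0, hj0, rfl⟩ := Finset.mem_image.mp hj'
        simp only [hT, Finset.mem_filter, Finset.mem_univ, true_and] at hj hj0
        exact hS (i, j0) hj0 (i, j0 + 1) hj
          (Or.inr (Or.inl (by rw [Prod.ext_iff]; simp)))
      have himg : ((T i).image (· + 1)).card = (T i).card :=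
        Finset.card_image_of_injective _ (add_left_injective 1)
      have hun : (T i ∪ (T i).image (· + 1)).card = (T i).card + (T i).card := by
        rw [Finset.card_union_of_disjoint hdisj, himg]
      have hle : (T i ∪ (T i).image (· + 1)).card ≤ n := by
        have := Finset.card_le_univ (T i ∪ (T i).image (· + 1))
        rwa [ZMod.card] at this
      omega
    have hsum : S.card = ∑ i : ZMod m, (T i).card := by
      rw [Finset.card_eq_sum_card_fiberwise
        (f := Prod.fst) (t := Finset.univ) (fun x _ => Finset.mem_univ _)]
      apply Finset.sum_congr rfl
      intro i _
      apply Finset.card_nbij' (i := fun p => p.2) (j := fun j => (i, j))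
      · intro p hp
        simp only [Finset.mem_coe, Finset.mem_filter] at hp
        simp only [hT, Finset.mem_coe, Finset.mem_filter, Finset.mem_univ, true_and]
        rw [← hp.2]
        exact hp.1
      · intro j hj
        simp only [hT, Finset.mem_coe, Finset.mem_filter, Finset.mem_univ, true_and] at hj
        exact Finset.mem_filter.mpr ⟨hj, rfl⟩
      · rintro ⟨p1, p2⟩ hp
        simp only [Finset.mem_coe, Finset.mem_filter] at hp
        rw [Prod.ext_iff]
        exact ⟨hp.2.symm, rfl⟩
      · intro j _; rfl
    have hbound : 2 * S.card ≤ m * (n - 1) := by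
      rw [hsum, Finset.mul_sum]
      calc ∑ i : ZMod m, 2 * (T i).card ≤ ∑ _i : ZMod m, (n - 1) :=
            Finset.sum_le_sum (fun i _ => hrow i)
        _ = m * (n - 1) := by rw [Finset.sum_const, Finset.card_univ, ZMod.card, smul_eq_mul]
    rw [Nat.le_div_iff_mul_le (by norm_num : 0 < 2)]
    calc S.card * 2 = 2 * S.card := by ring
      _ ≤ m * (n - 1) := hbound
end

section
/- For odd integers m ≥ n ≥ 3, the maximum size of an independent set in the graph on (ZMod m) × (ZMod n) where (i,j) is adjacent to (i±1,j) and (i,j±1) equals m(n-1)/2. -/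
lemma int_helper (n : ℕ) (D : ℤ) (hdvd : (n:ℤ) ∣ D) (hlt : D.natAbs < n) : D = 0 :=
  Int.eq_zero_of_dvd_of_natAbs_lt_natAbs hdvd (by simpa using hlt)

lemma cycle_bound {n : ℕ} [NeZero n] (T : Finset (ZMod n))
    (hT : ∀ a ∈ T, a + 1 ∉ T) : 2 * T.card ≤ n := by
  have hdisj : Disjoint T (T.image (· + 1)) := by
    rw [Finset.disjoint_right]
    intro a ha haT
    obtain ⟨b, hb, rfl⟩ := Finset.mem_image.mp ha
    exact hT b hb haT
  have hcard : (T.image (· + 1)).card = T.card :=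
    Finset.card_image_of_injective _ (add_left_injective 1)
  have hle : (T ∪ T.image (· + 1)).card ≤ Fintype.card (ZMod n) := Finset.card_le_univ _
  rw [Finset.card_union_of_disjoint hdisj, ZMod.card] at hle
  omega

lemma indep_bound (m n : ℕ) [NeZero m] [NeZero n] (hno : Odd n)
    (S : Finset (ZMod m × ZMod n)) (hS : Indep S) : S.card ≤ m * ((n-1)/2) := by
  classical
  rw [Finset.card_eq_sum_card_fiberwise (f := Prod.fst) (t := Finset.univ)
    (fun x _ => Finset.mem_univ _)]
  have hbound : ∀ i : ZMod m, (S.filter fun v => v.1 = i).card ≤ (n-1)/2 := by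
    intro i
    set T := (S.filter fun v => v.1 = i).image Prod.snd with hT
    have hcard : (S.filter fun v => v.1 = i).card = T.card := by
      rw [hT]
      rw [Finset.card_image_of_injOn]
      intro u hu v hv huv
      simp only [Finset.mem_coe, Finset.mem_filter] at hu hv
      exact Prod.ext (hu.2.trans hv.2.symm) huv
    rw [hcard]
    have h2 : 2 * T.card ≤ n := by
      apply cycle_bound
      intro a ha hab
      simp only [hT, Finset.mem_image, Finset.mem_filter] at ha hab
      obtain ⟨u, ⟨huS, hu1⟩, hu2⟩ := ha
      obtain ⟨v, ⟨hvS, hv1⟩, hv2⟩ := hab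
      apply hS u huS v hvS
      right; left
      refine Prod.ext ?_ ?_ <;> simp [hv1, hu1, hv2, hu2]
    obtain ⟨b, hb⟩ := hno
    omega
  calc ∑ i : ZMod m, (S.filter fun v => v.1 = i).card
      ≤ ∑ _i : ZMod m, (n-1)/2 := Finset.sum_le_sum fun i _ => hbound i
    _ = m * ((n-1)/2) := by rw [Finset.sum_const, Finset.card_univ, ZMod.card, smul_eq_mul]

lemma indep_construct (m n k : ℕ) [NeZero m] [NeZero n] (hmn : n ≤ m)
    (hm : Odd m) (hn : Odd n) (hk : n = 2*k+1) (hk1 : 1 ≤ k) :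
    ∃ S : Finset (ZMod m × ZMod n), Indep S ∧ S.card = m * k := by
  classical
  set s : ℕ → ℕ := fun i => min i (m + n - i) with hs
  set F : ℕ × ℕ → ZMod m × ZMod n :=
    fun p => ((p.1 : ZMod m), ((s p.1 + 2 * p.2 : ℕ) : ZMod n)) with hF
  have sstep : ∀ i, i + 1 < m → s (i+1) = s i + 1 ∨ s i = s (i+1) + 1 := by
    intro i hi
    obtain ⟨a, ha⟩ := hm; obtain ⟨b, hb⟩ := hn
    simp only [hs]; omega
  have swrap : s (m-1) = n + 1 ∨ s (m-1) = n - 1 := by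
    obtain ⟨a, ha⟩ := hm; obtain ⟨b, hb⟩ := hn
    simp only [hs]; omega
  have s0 : s 0 = 0 := by simp [hs]
  have vert : ∀ p q : ℕ × ℕ, p.1 < m → p.2 < k → q.1 < m → q.2 < k →
      F q = F p + (1, 0) → False := by
    intro p q hp1 hp2 hq1 hq2 hEq
    rw [Prod.ext_iff] at hEq
    obtain ⟨h1, h2⟩ := hEq
    simp only [hF, Prod.fst_add, Prod.snd_add] at h1 h2
    rw [add_zero] at h2
    have h1' : (q.1 : ℕ) ≡ p.1 + 1 [MOD m] := by
      rw [← ZMod.natCast_eq_natCast_iff]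
      push_cast
      exact h1
    have h2' : (s q.1 + 2*q.2 : ℕ) ≡ (s p.1 + 2*p.2) [MOD n] :=
      (ZMod.natCast_eq_natCast_iff _ _ _).mp h2
    have hq : q.1 = (p.1 + 1) % m := by
      have h := h1'
      unfold Nat.ModEq at h
      rwa [Nat.mod_eq_of_lt hq1] at h
    have hd := h2'.dvd
    push_cast at hd
    rcases Nat.lt_or_ge (p.1 + 1) m with hlt | hge
    · have hq1eq : q.1 = p.1 + 1 := by rw [hq, Nat.mod_eq_of_lt hlt]
      have hstep := sstep p.1 hlt
      rw [hq1eq] at hd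
      have hz := int_helper n _ hd (by rcases hstep with h | h <;> omega)
      rcases hstep with h | h <;> omega
    · have hpm : p.1 = m - 1 := by omega
      have hq0 : q.1 = 0 := by rw [hq, show p.1 + 1 = m by omega, Nat.mod_self]
      rw [hpm, hq0, s0] at hd
      have hd2 : (n:ℤ) ∣ ((s (m-1) : ℤ) + 2*(p.2:ℤ) - ((0:ℕ) + 2*(q.2:ℤ))) - n :=
        dvd_sub hd (dvd_refl _)
      have hz := int_helper n _ hd2 (by rcases swrap with h | h <;> omega)
      rcases swrap with h | h <;> omega
  have horiz : ∀ p q : ℕ × ℕ, p.1 < m → p.2 < k → q.1 < m → q.2 < k →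
      F q = F p + (0, 1) → False := by
    intro p q hp1 hp2 hq1 hq2 hEq
    rw [Prod.ext_iff] at hEq
    obtain ⟨h1, h2⟩ := hEq
    simp only [hF, Prod.fst_add, Prod.snd_add] at h1 h2
    rw [add_zero] at h1
    have h1' : q.1 = p.1 := by
      have h := (ZMod.natCast_eq_natCast_iff q.1 p.1 m).mp h1
      unfold Nat.ModEq at h
      rwa [Nat.mod_eq_of_lt hq1, Nat.mod_eq_of_lt hp1] at h
    have h2' : (s q.1 + 2*q.2 : ℕ) ≡ (s p.1 + 2*p.2 + 1) [MOD n] := by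
      rw [← ZMod.natCast_eq_natCast_iff]
      push_cast
      push_cast at h2
      linear_combination h2
    have hd := h2'.dvd
    push_cast at hd
    rw [h1'] at hd
    have hz := int_helper n _ hd (by omega)
    omega
  refine ⟨(Finset.range m ×ˢ Finset.range k).image F, ?_, ?_⟩
  · intro u hu v hv hadj
    simp only [Finset.mem_image, Finset.mem_product, Finset.mem_range] at hu hv
    obtain ⟨p, ⟨hp1, hp2⟩, rfl⟩ := hu
    obtain ⟨q, ⟨hq1, hq2⟩, rfl⟩ := hv
    rcases hadj with h | h | h | h
    · exact vert p q hp1 hp2 hq1 hq2 h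
    · exact horiz p q hp1 hp2 hq1 hq2 h
    · exact vert q p hq1 hq2 hp1 hp2 h
    · exact horiz q p hq1 hq2 hp1 hp2 h
  · rw [Finset.card_image_of_injOn, Finset.card_product, Finset.card_range, Finset.card_range]
    intro p hp q hq hpq
    simp only [Finset.coe_product, Finset.coe_range, Set.mem_prod, Set.mem_Iio] at hp hq
    rw [Prod.ext_iff] at hpq
    obtain ⟨h1, h2⟩ := hpq
    simp only [hF] at h1 h2
    have h1' : p.1 = q.1 := by
      have h := (ZMod.natCast_eq_natCast_iff p.1 q.1 m).mp h1
      unfold Nat.ModEq at h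
      rwa [Nat.mod_eq_of_lt hp.1, Nat.mod_eq_of_lt hq.1] at h
    have h2' := (ZMod.natCast_eq_natCast_iff _ _ _).mp h2
    have hd := h2'.dvd
    push_cast at hd
    rw [h1'] at hd
    have hz := int_helper n _ hd (by omega)
    refine Prod.ext h1' ?_
    omega

theorem stmt2 (m n : ℕ) [NeZero m] [NeZero n] (hn : 3 ≤ n) (hmn : n ≤ m)
    (hmo : Odd m) (hno : Odd n) :
    IsGreatest {k : ℕ | ∃ S : Finset (ZMod m × ZMod n), Indep S ∧ S.card = k}
      (m * (n - 1) / 2) := by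
  obtain ⟨k, hk⟩ : ∃ k, n = 2*k+1 := by obtain ⟨b, rfl⟩ := hno; exact ⟨b, by ring⟩
  have hk1 : 1 ≤ k := by omega
  have hEq : m * (n-1) / 2 = m * k := by
    rw [show n - 1 = 2*k by omega, show m * (2*k) = 2*(m*k) by ring]
    exact Nat.mul_div_cancel_left _ (by norm_num)
  constructor
  · obtain ⟨S, h1, h2⟩ := indep_construct m n k hmn hmo hno hk hk1
    exact ⟨S, h1, by omega⟩
  · rintro x ⟨S, hS, rfl⟩
    have hb := indep_bound m n hno S hS
    have h2 : (n-1)/2 = k := by omega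
    rw [h2] at hb
    omega
end

section
/- For even integers m, n ≥ 2, the Italian domination number of the directed Cartesian product C_m □ C_n equals mn/2. -/
theorem stmt6 (m n : ℕ) [NeZero m] [NeZero n] (hm : 2 ≤ m) (hn : 2 ≤ n)
    (hme : Even m) (hne : Even n) :
    IsLeast (weights m n) (m * n / 2) := by
  have hdm : 2 ∣ m := hme.two_dvd
  have hdn : 2 ∣ n := hne.two_dvd
  have hcard : Fintype.card (ZMod m × ZMod n) = m * n := by
    simp [Fintype.card_prod, ZMod.card]
  constructor
  · -- membership: checkerboard function
    set P : ZMod m × ZMod n → ZMod 2 := fun v =>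
      ZMod.castHom hdm (ZMod 2) v.1 + ZMod.castHom hdn (ZMod 2) v.2 with hP
    refine ⟨fun v => if P v = 0 then 1 else 0, ⟨fun v => by dsimp only; split <;> omega, ?_⟩, ?_⟩
    · intro v hv
      have hv1 : P v = 1 := by
        by_contra h
        have : P v = 0 ∨ P v = 1 := by
          have := ZMod.val_lt (P v)
          generalize P v = x at *
          fin_cases x; exacts [Or.inl rfl, Or.inr rfl]
        simp_all
      have h1 : P (v.1 - 1, v.2) = 0 := by
        simp only [hP, map_sub, map_one]
        simp only [hP] at hv1
        linear_combination hv1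
      have h2 : P (v.1, v.2 - 1) = 0 := by
        simp only [hP, map_sub, map_one]
        simp only [hP] at hv1
        linear_combination hv1
      dsimp only
      rw [if_pos h1, if_pos h2]
    · -- the sum equals m*n/2
      have hsum : ∑ v : ZMod m × ZMod n, (if P v = 0 then 1 else 0)
          = (Finset.univ.filter (fun v => P v = 0)).card := by
        simp [Finset.sum_ite_eq, Finset.sum_boole]
      rw [hsum]
      have hbij : (Finset.univ.filter (fun v => P v = 0)).card
          = (Finset.univ.filter (fun v => ¬ P v = 0)).card := by
        apply Finset.card_bij' (fun v _ => v + ((1 : ZMod m), (0 : ZMod n)))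
          (fun v _ => v - ((1 : ZMod m), (0 : ZMod n)))
        · intro a ha
          simp only [Finset.mem_filter, Finset.mem_univ, true_and] at ha ⊢
          have : P (a + ((1 : ZMod m), (0 : ZMod n))) = P a + 1 := by
            simp only [hP, Prod.fst_add, Prod.snd_add, map_add, map_one, map_zero]
            ring
          rw [this, ha]; decide
        · intro a ha
          simp only [Finset.mem_filter, Finset.mem_univ, true_and] at ha ⊢
          have h1 : P a = 1 := by
            by_contra h
            have : P a = 0 ∨ P a = 1 := by
              generalize P a = x at *
              fin_cases x; exacts [Or.inl rfl, Or.inr rfl]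
            simp_all
          have : P (a - ((1 : ZMod m), (0 : ZMod n))) = P a - 1 := by
            simp only [hP, Prod.fst_sub, Prod.snd_sub, map_sub, map_one, map_zero]
            ring
          rw [this, h1]; decide
        · intro a _; simp
        · intro a _; simp
      have htot := Finset.card_filter_add_card_filter_not
        (s := (Finset.univ : Finset (ZMod m × ZMod n))) (p := fun v => P v = 0)
      rw [Finset.card_univ, hcard] at htot
      omega
  · -- lower bound
    rintro w ⟨f, ⟨hf2, hdom⟩, rfl⟩
    set Z := Finset.univ.filter (fun v : ZMod m × ZMod n => f v = 0) with hZ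
    have hshift1 : ∑ v : ZMod m × ZMod n, f (v.1 - 1, v.2) = ∑ v, f v := by
      apply Fintype.sum_equiv (Equiv.subRight ((1 : ZMod m), (0 : ZMod n)))
      intro v
      simp [Equiv.subRight, Prod.sub_def]
    have hshift2 : ∑ v : ZMod m × ZMod n, f (v.1, v.2 - 1) = ∑ v, f v := by
      apply Fintype.sum_equiv (Equiv.subRight ((0 : ZMod m), (1 : ZMod n)))
      intro v
      simp [Equiv.subRight, Prod.sub_def]
    have key : 2 * Z.card ≤ 2 * ∑ v, f v := by
      calc 2 * Z.card = ∑ _v ∈ Z, 2 := by rw [Finset.sum_const, smul_eq_mul, mul_comm]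
        _ ≤ ∑ v ∈ Z, (f (v.1 - 1, v.2) + f (v.1, v.2 - 1)) := by
            apply Finset.sum_le_sum
            intro v hv
            exact hdom v (Finset.mem_filter.mp hv).2
        _ ≤ ∑ v : ZMod m × ZMod n, (f (v.1 - 1, v.2) + f (v.1, v.2 - 1)) := by
            apply Finset.sum_le_sum_of_subset (Finset.subset_univ Z)
        _ = 2 * ∑ v, f v := by
            rw [Finset.sum_add_distrib, hshift1, hshift2]; ring
    have hnz : (Finset.univ.filter (fun v : ZMod m × ZMod n => ¬ f v = 0)).card
        ≤ ∑ v, f v := by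
      calc (Finset.univ.filter (fun v : ZMod m × ZMod n => ¬ f v = 0)).card
          = ∑ _v ∈ Finset.univ.filter (fun v : ZMod m × ZMod n => ¬ f v = 0), 1 := by simp
        _ ≤ ∑ v ∈ Finset.univ.filter (fun v : ZMod m × ZMod n => ¬ f v = 0), f v := by
            apply Finset.sum_le_sum
            intro v hv
            have := (Finset.mem_filter.mp hv).2
            omega
        _ ≤ ∑ v, f v := Finset.sum_le_sum_of_subset (Finset.subset_univ _)
    have htot := Finset.card_filter_add_card_filter_not
      (s := (Finset.univ : Finset (ZMod m × ZMod n))) (p := fun v => f v = 0)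
    rw [Finset.card_univ, hcard, ← hZ] at htot
    omega
end

section
/- For integers m even, m ≥ 2, and n odd, n ≥ 3, the Italian domination number of the directed Cartesian product C_m □ C_n equals m(n+1)/2. -/
open Finset

section AuxLemmas

lemma zmod_cast_val {n : ℕ} [NeZero n] (x : ZMod n) : ((x.val : ℕ) : ZMod n) = x := by
  rw [ZMod.natCast_val, ZMod.cast_id]

lemma zmod_val_pred {n : ℕ} [NeZero n] {x : ZMod n} (hx : x ≠ 0) :
    (x - 1).val = x.val - 1 := by
  have h1 : x.val ≠ 0 := fun h => hx ((ZMod.val_eq_zero x).1 h)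
  have hc : x - 1 = ((x.val - 1 : ℕ) : ZMod n) := by
    rw [Nat.cast_sub (by omega : 1 ≤ x.val), zmod_cast_val, Nat.cast_one]
  rw [hc, ZMod.val_cast_of_lt (by have := ZMod.val_lt x; omega)]

lemma zmod_val_succ {n : ℕ} [NeZero n] {x : ZMod n} (hx : x.val + 1 < n) :
    (x + 1).val = x.val + 1 := by
  have hc : x + 1 = ((x.val + 1 : ℕ) : ZMod n) := by
    rw [Nat.cast_add, zmod_cast_val, Nat.cast_one]
  rw [hc, ZMod.val_cast_of_lt hx]

lemma zmod_val_neg_one' {m : ℕ} [NeZero m] (hm : 2 ≤ m) : ((0 : ZMod m) - 1).val = m - 1 := by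
  have hc : (0 : ZMod m) - 1 = ((m - 1 : ℕ) : ZMod m) := by
    rw [Nat.cast_sub (by omega : 1 ≤ m), ZMod.natCast_self, Nat.cast_one]
  rw [hc, ZMod.val_cast_of_lt (by omega)]

lemma parity_flip {m : ℕ} [NeZero m] (hm : 2 ≤ m) (hme : Even m) (i : ZMod m) :
    (i - 1).val % 2 ≠ i.val % 2 := by
  obtain ⟨t, ht⟩ := hme
  by_cases h0 : i = 0
  · rw [h0, zmod_val_neg_one' hm]
    simp only [ZMod.val_zero]
    omega
  · rw [zmod_val_pred h0]
    have h1 : i.val ≠ 0 := fun h => h0 ((ZMod.val_eq_zero i).1 h)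
    omega

lemma evens_range (N : ℕ) : ((Finset.range N).filter (fun t => t % 2 = 0)).card = (N + 1) / 2 := by
  induction N with
  | zero => simp
  | succ k ih =>
    rw [Finset.range_add_one, Finset.filter_insert]
    by_cases h : k % 2 = 0
    · rw [if_pos h, Finset.card_insert_of_notMem (by simp), ih]; omega
    · rw [if_neg h, ih]; omega

lemma evens_zmod (n : ℕ) [NeZero n] :
    (Finset.univ.filter (fun y : ZMod n => y.val % 2 = 0)).card = (n + 1) / 2 := by
  rw [← evens_range n]
  apply Finset.card_bij (fun y _ => y.val)
  · intro y hy
    simp only [Finset.mem_filter, Finset.mem_univ, true_and] at hy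
    simp [Finset.mem_filter, Finset.mem_range, ZMod.val_lt y, hy]
  · intro y _ y' _ h
    exact ZMod.val_injective n h
  · intro t ht
    simp only [Finset.mem_filter, Finset.mem_range] at ht
    refine ⟨(t : ZMod n), ?_, ZMod.val_cast_of_lt ht.1⟩
    simp [Finset.mem_filter, ZMod.val_cast_of_lt ht.1, ht.2]

lemma shift_filter_card {n : ℕ} [NeZero n] (c : ZMod n) :
    (Finset.univ.filter (fun j : ZMod n => (j - c).val % 2 = 0)).card
      = (Finset.univ.filter (fun y : ZMod n => y.val % 2 = 0)).card := by
  apply Finset.card_bij (fun j _ => j - c)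
  · intro j hj
    simp only [Finset.mem_filter, Finset.mem_univ, true_and] at hj ⊢
    exact hj
  · intro j _ j' _ h
    have := congrArg (fun z => z + c) h
    simpa using this
  · intro y hy
    simp only [Finset.mem_filter, Finset.mem_univ, true_and] at hy
    exact ⟨y + c, by simpa using hy, by ring⟩

end AuxLemmas


/-- number of positions carrying a `2` preceded by a nonzero entry -/
def psiRow {n : ℕ} [NeZero n] (x : ZMod n → ℕ) : ℕ :=
  (univ.filter (fun j : ZMod n => x j = 2 ∧ x (j - 1) ≠ 0)).card

lemma edge_lemma {n : ℕ} [NeZero n] (hno : Odd n) (a b : ZMod n → ℕ)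
    (ha2 : ∀ j, a j ≤ 2) (hb2 : ∀ j, b j ≤ 2)
    (hdom : ∀ j, b j = 0 → 2 ≤ a j + b (j - 1)) :
    n + 1 + 2 * psiRow b ≤ 2 * (∑ j, b j) + 2 * psiRow a := by
  classical
  set Z : Finset (ZMod n) := univ.filter (fun j => b j = 0) with hZ
  set Nn : Finset (ZMod n) := univ.filter (fun j => ¬ b j = 0) with hNn
  set Q : Finset (ZMod n) := univ.filter (fun j => b j = 2) with hQ
  set Wp : Finset (ZMod n) := univ.filter (fun j => b j = 2 ∧ b (j - 1) = 0) with hWp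
  set Pb : Finset (ZMod n) := univ.filter (fun j => b j = 2 ∧ b (j - 1) ≠ 0) with hPb
  set Pa : Finset (ZMod n) := univ.filter (fun j => a j = 2 ∧ a (j - 1) ≠ 0) with hPa
  -- fact 1 : Z.card + Nn.card = n
  have h1 : Z.card + Nn.card = n := by
    rw [hZ, hNn, Finset.card_filter_add_card_filter_not]
    simp [ZMod.card]
  -- fact 2 : Pb.card + Wp.card = Q.card
  have h2 : Pb.card + Wp.card = Q.card := by
    have := Finset.card_filter_add_card_filter_not
      (s := Q) (p := fun j => b (j - 1) ≠ 0)
    rw [← this]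
    congr 1
    · rw [hPb, hQ, Finset.filter_filter]
    · rw [hWp, hQ, Finset.filter_filter]
      congr 1
      ext j
      simp only [not_not]
  -- fact 3 : Nn.card + Q.card ≤ ∑ b
  have h3 : Nn.card + Q.card ≤ ∑ j, b j := by
    rw [hNn, hQ, Finset.card_filter, Finset.card_filter, ← Finset.sum_add_distrib]
    apply Finset.sum_le_sum
    intro j _
    have := hb2 j
    split_ifs <;> omega
  -- fact 4 : injection  Z.card ≤ Nn.card + Pa.card + Wp.card
  have h4 : Z.card ≤ Nn.card + Pa.card + Wp.card := by
    set T : Finset (ℕ × ZMod n) :=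
      ((Nn.image (fun k => (0, k))) ∪ (Pa.image (fun k => (1, k)))) ∪
        (Wp.image (fun k => (2, k))) with hT
    have hcard : T.card ≤ Nn.card + Pa.card + Wp.card := by
      calc T.card ≤ ((Nn.image (fun k => (0, k))) ∪ (Pa.image (fun k => (1, k)))).card
            + (Wp.image (fun k => (2, k))).card := Finset.card_union_le _ _
        _ ≤ ((Nn.image (fun k => (0, k))).card + (Pa.image (fun k => (1, k))).card)
            + (Wp.image (fun k => (2, k))).card := by
              exact Nat.add_le_add_right (Finset.card_union_le _ _) _
        _ ≤ Nn.card + Pa.card + Wp.card := by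
              gcongr <;> exact Finset.card_image_le
    refine le_trans (Finset.card_le_card_of_injOn
      (fun j => if b (j - 1) = 0 then
          (if a (j - 1) = 0 then
            (if b (j - 3) = 0 then ((2 : ℕ), j - 2) else (0, j - 3))
           else (1, j))
        else (0, j - 1)) ?_ ?_) hcard
    · -- maps into T
      intro j hj
      have hbj : b j = 0 := by simpa [hZ] using hj
      by_cases hb1 : b (j - 1) = 0
      · by_cases ha1 : a (j - 1) = 0
        · -- derive b (j-2) = 2
          have hd := hdom (j - 1) hb1
          have hj2 : j - 1 - 1 = j - 2 := by ring
          rw [hj2, ha1] at hd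
          have hb2' : b (j - 2) = 2 := by have := hb2 (j - 2); omega
          by_cases hb3 : b (j - 3) = 0
          · simp only [if_pos hb1, if_pos ha1, if_pos hb3]
            apply Finset.mem_union_right
            apply Finset.mem_image_of_mem
            have hj3 : j - 2 - 1 = j - 3 := by ring
            simp [hWp, hb2', hj3, hb3]
          · simp only [if_pos hb1, if_pos ha1, if_neg hb3]
            apply Finset.mem_union_left
            apply Finset.mem_union_left
            apply Finset.mem_image_of_mem
            simp [hNn, hb3]
        · -- a j = 2
          have hd := hdom j hbj
          rw [hb1] at hd
          have haj : a j = 2 := by have := ha2 j; omega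
          simp only [if_pos hb1, if_neg ha1]
          apply Finset.mem_union_left
          apply Finset.mem_union_right
          apply Finset.mem_image_of_mem
          simp [hPa, haj, ha1]
      · simp only [if_neg hb1]
        apply Finset.mem_union_left
        apply Finset.mem_union_left
        apply Finset.mem_image_of_mem
        simp [hNn, hb1]
    · -- injective on Z
      intro j hj j' hj' heq
      have hbj : b j = 0 := by simpa [hZ] using hj
      have hbj' : b j' = 0 := by simpa [hZ] using hj'
      -- helper to derive b (x-2) = 2 in the deep branch
      have deep : ∀ x : ZMod n, b x = 0 → b (x - 1) = 0 → a (x - 1) = 0 → b (x - 2) = 2 := by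
        intro x _ hb1 ha1
        have hd := hdom (x - 1) hb1
        have hx2 : x - 1 - 1 = x - 2 := by ring
        rw [hx2, ha1] at hd
        have := hb2 (x - 2); omega
      by_cases hb1 : b (j - 1) = 0 <;> by_cases hb1' : b (j' - 1) = 0
      · by_cases ha1 : a (j - 1) = 0 <;> by_cases ha1' : a (j' - 1) = 0
        · by_cases hb3 : b (j - 3) = 0 <;> by_cases hb3' : b (j' - 3) = 0
          · simp only [if_pos hb1, if_pos ha1, if_pos hb3, if_pos hb1', if_pos ha1',
              if_pos hb3', Prod.mk.injEq] at heq
            have : j - 2 = j' - 2 := heq.2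
            linear_combination this
          · simp only [if_pos hb1, if_pos ha1, if_pos hb3, if_pos hb1', if_pos ha1',
              if_neg hb3', Prod.mk.injEq] at heq
            omega
          · simp only [if_pos hb1, if_pos ha1, if_neg hb3, if_pos hb1', if_pos ha1',
              if_pos hb3', Prod.mk.injEq] at heq
            omega
          · simp only [if_pos hb1, if_pos ha1, if_neg hb3, if_pos hb1', if_pos ha1',
              if_neg hb3', Prod.mk.injEq] at heq
            have : j - 3 = j' - 3 := heq.2
            linear_combination this
        · -- j deep, j' type B2 : tags (0 or 2) vs 1
          by_cases hb3 : b (j - 3) = 0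
          · simp only [if_pos hb1, if_pos ha1, if_pos hb3, if_pos hb1',
              if_neg ha1', Prod.mk.injEq] at heq
            omega
          · simp only [if_pos hb1, if_pos ha1, if_neg hb3, if_pos hb1',
              if_neg ha1', Prod.mk.injEq] at heq
            omega
        · by_cases hb3' : b (j' - 3) = 0
          · simp only [if_pos hb1, if_neg ha1, if_pos hb1', if_pos ha1', if_pos hb3',
              Prod.mk.injEq] at heq
            omega
          · simp only [if_pos hb1, if_neg ha1, if_pos hb1', if_pos ha1',
              if_neg hb3', Prod.mk.injEq] at heq
            omega
        · simp only [if_pos hb1, if_neg ha1, if_pos hb1', if_neg ha1', Prod.mk.injEq] at heq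
          exact heq.2
      · -- j's branch under hb1, j' type B1
        by_cases ha1 : a (j - 1) = 0
        · by_cases hb3 : b (j - 3) = 0
          · simp only [if_pos hb1, if_pos ha1, if_pos hb3, if_neg hb1', Prod.mk.injEq] at heq
            omega
          · simp only [if_pos hb1, if_pos ha1, if_neg hb3, if_neg hb1', Prod.mk.injEq] at heq
            -- j - 3 = j' - 1  : then b (j-2) = 2 but b (j' ) = 0 with j' = j - 2
            have h2' : b (j - 2) = 2 := deep j hbj hb1 ha1
            have hjj : j' = j - 2 := by
              have := heq.2
              linear_combination -this
            rw [hjj] at hbj'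
            rw [hbj'] at h2'
            omega
        · simp only [if_pos hb1, if_neg ha1, if_neg hb1', Prod.mk.injEq] at heq
          omega
      · by_cases ha1' : a (j' - 1) = 0
        · by_cases hb3' : b (j' - 3) = 0
          · simp only [if_neg hb1, if_pos hb1', if_pos ha1', if_pos hb3', Prod.mk.injEq] at heq
            omega
          · simp only [if_neg hb1, if_pos hb1', if_pos ha1', if_neg hb3', Prod.mk.injEq] at heq
            have h2' : b (j' - 2) = 2 := deep j' hbj' hb1' ha1'
            have hjj : j = j' - 2 := by
              have := heq.2
              linear_combination this
            rw [hjj] at hbj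
            rw [hbj] at h2'
            omega
        · simp only [if_neg hb1, if_pos hb1', if_neg ha1', Prod.mk.injEq] at heq
          omega
      · simp only [if_neg hb1, if_neg hb1', Prod.mk.injEq] at heq
        have : j - 1 = j' - 1 := heq.2
        linear_combination this
  -- assemble
  obtain ⟨k, hk⟩ := hno
  have hpsib : psiRow b = Pb.card := rfl
  have hpsia : psiRow a = Pa.card := rfl
  rw [hpsib, hpsia]
  omega


theorem stmt7 (m n : ℕ) [NeZero m] [NeZero n] (hm : 2 ≤ m) (hn : 3 ≤ n)
    (hme : Even m) (hno : Odd n) :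
    IsLeast (weights m n) (m * (n + 1) / 2) := by
  constructor
  · -- membership : the explicit construction
    classical
    obtain ⟨k, hk⟩ := hno
    -- the construction
    set d : ZMod m → ZMod n := fun i => if i.val % 2 = 0 then 1 else 0 with hd
    set f0 : ZMod m × ZMod n → ℕ :=
      fun v => if (v.2 - d v.1).val % 2 = 0 then 1 else 0 with hf0
    have hbound : ∀ v, f0 v ≤ 2 := by intro v; rw [hf0]; dsimp only; split_ifs <;> omega
    have hdom : ∀ v : ZMod m × ZMod n, f0 v = 0 →
        2 ≤ f0 (v.1 - 1, v.2) + f0 (v.1, v.2 - 1) := by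
      intro v hv
      rw [hf0] at hv ⊢
      dsimp only at hv ⊢
      set x : ZMod n := v.2 - d v.1 with hx
      have hxodd : x.val % 2 = 1 := by
        by_contra hcon
        rw [if_pos (by omega)] at hv
        exact one_ne_zero hv
      have hxne : x ≠ 0 := by
        intro h
        rw [h] at hxodd
        simp [ZMod.val_zero] at hxodd
      have hxv1 : 1 ≤ x.val := by
        have h1 : x.val ≠ 0 := fun h => hxne ((ZMod.val_eq_zero x).1 h)
        omega
      have hpred : (x - 1).val % 2 = 0 := by
        rw [zmod_val_pred hxne]; omega
      have hterm2 : (if (v.2 - 1 - d v.1).val % 2 = 0 then 1 else 0) = 1 := by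
        rw [if_pos]
        have : v.2 - 1 - d v.1 = x - 1 := by rw [hx]; ring
        rw [this]; exact hpred
      have hterm1 : (if (v.2 - d (v.1 - 1)).val % 2 = 0 then 1 else 0) = 1 := by
        rw [if_pos]
        have hpf := parity_flip hm hme v.1
        by_cases hi : v.1.val % 2 = 0
        · -- d v.1 = 1, d (v.1 - 1) = 0
          have hdi : d v.1 = 1 := by rw [hd]; simp [hi]
          have hdi' : d (v.1 - 1) = 0 := by rw [hd]; simp only; rw [if_neg (by omega)]
          have hxv : x.val < n := ZMod.val_lt x
          have hxlt : x.val + 1 < n := by omega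
          have : v.2 - d (v.1 - 1) = x + 1 := by rw [hdi', hx, hdi]; ring
          rw [this, zmod_val_succ hxlt]
          omega
        · have hdi : d v.1 = 0 := by rw [hd]; simp only; rw [if_neg hi]
          have hdi' : d (v.1 - 1) = 1 := by
            rw [hd]; simp only; rw [if_pos (by omega)]
          have : v.2 - d (v.1 - 1) = x - 1 := by rw [hdi', hx, hdi]; ring
          rw [this]
          exact hpred
      rw [hterm1, hterm2]
    have hweight : ∑ v : ZMod m × ZMod n, f0 v = m * (n + 1) / 2 := by
      rw [hf0]
      rw [Fintype.sum_prod_type]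
      have hrow : ∀ i : ZMod m,
          (∑ j : ZMod n, if ((j : ZMod n) - d i).val % 2 = 0 then 1 else 0) = (n + 1) / 2 := by
        intro i
        rw [← Finset.card_filter]
        rw [shift_filter_card (d i), evens_zmod]
      calc (∑ i : ZMod m, ∑ j : ZMod n, if (j - d i).val % 2 = 0 then 1 else 0)
          = ∑ _i : ZMod m, (n + 1) / 2 := by
            apply Finset.sum_congr rfl; intro i _; exact hrow i
        _ = m * ((n + 1) / 2) := by
            rw [Finset.sum_const, Finset.card_univ, ZMod.card, smul_eq_mul]
        _ = m * (n + 1) / 2 := by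
            rw [Nat.mul_div_assoc m ⟨k + 1, by omega⟩]
    exact ⟨f0, ⟨hbound, hdom⟩, hweight⟩
  · -- lower bound
    intro w hw
    obtain ⟨f, ⟨hf2, hdom⟩, rfl⟩ := hw
    classical
    set Ψ : ZMod m → ℕ := fun i => psiRow (fun j => f (i, j)) with hΨ
    have key : ∀ i : ZMod m,
        n + 1 + 2 * Ψ i ≤ 2 * (∑ j : ZMod n, f (i, j)) + 2 * Ψ (i - 1) := by
      intro i
      exact edge_lemma hno (fun j => f (i - 1, j)) (fun j => f (i, j))
        (fun j => hf2 _) (fun j => hf2 _) (fun j h => hdom (i, j) h)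
    have hsum := Finset.sum_le_sum (fun i (_ : i ∈ (univ : Finset (ZMod m))) => key i)
    have hL : ∑ i : ZMod m, (n + 1 + 2 * Ψ i) = m * (n + 1) + 2 * ∑ i, Ψ i := by
      rw [Finset.sum_add_distrib, Finset.sum_const, Finset.card_univ, ZMod.card,
        smul_eq_mul, ← Finset.mul_sum]
    have hshift : ∑ i : ZMod m, Ψ (i - 1) = ∑ i : ZMod m, Ψ i :=
      Fintype.sum_equiv (Equiv.subRight (1 : ZMod m)) _ _ (fun i => rfl)
    have hR : ∑ i : ZMod m, (2 * (∑ j : ZMod n, f (i, j)) + 2 * Ψ (i - 1))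
        = 2 * (∑ i : ZMod m, ∑ j : ZMod n, f (i, j)) + 2 * ∑ i, Ψ i := by
      rw [Finset.sum_add_distrib, ← Finset.mul_sum, ← Finset.mul_sum, hshift]
    rw [hL, hR] at hsum
    have hW : ∑ v : ZMod m × ZMod n, f v = ∑ i : ZMod m, ∑ j : ZMod n, f (i, j) :=
      Fintype.sum_prod_type f
    rw [hW]
    set S := ∑ i : ZMod m, ∑ j : ZMod n, f (i, j)
    set K := m * (n + 1)
    omega
end

section
/- For any digraph D on n vertices, the Italian domination number satisfies γ_I(D) ≥ ⌈2n / (2 + Δ⁺(D))⌉, where Δ⁺(D) is the maximum out-degree. -/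
theorem stmt11 (V : Type*) [Fintype V] (D : V → V → Prop) [DecidableRel D]
    (hirr : Irreflexive D) :
    ⌈(2 * Fintype.card V : ℚ) /
        (2 + ((Finset.univ.sup (fun v => (Finset.univ.filter (fun u => D v u)).card) : ℕ) : ℚ))⌉₊
      ≤ sInf {w : ℕ | ∃ f : V → ℕ, (∀ v, f v ≤ 2) ∧
          (∀ v, f v = 0 → 2 ≤ ∑ u ∈ Finset.univ.filter (fun u => D u v), f u) ∧
          ∑ v, f v = w} := by
  set Δ : ℕ := Finset.univ.sup (fun v => (Finset.univ.filter (fun u => D v u)).card) with hΔ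
  set S : Set ℕ := {w : ℕ | ∃ f : V → ℕ, (∀ v, f v ≤ 2) ∧
      (∀ v, f v = 0 → 2 ≤ ∑ u ∈ Finset.univ.filter (fun u => D u v), f u) ∧
      ∑ v, f v = w} with hS
  have hne : S.Nonempty := by
    refine ⟨2 * Fintype.card V, fun _ => 2, fun v => le_refl 2, fun v h => by simp at h, ?_⟩
    simp [Finset.sum_const, mul_comm]
  obtain ⟨f, hf2, hdom, hsum⟩ := Nat.sInf_mem hne
  set w := sInf S with hw
  -- key inequality in ℕ
  have key : 2 * Fintype.card V ≤ w * (2 + Δ) := by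
    have h1 : 2 * Fintype.card V ≤
        ∑ v : V, (2 * f v + ∑ u ∈ Finset.univ.filter (fun u => D u v), f u) := by
      have h0 : 2 * Fintype.card V = ∑ _v : V, 2 := by
        simp [Finset.sum_const, mul_comm]
      rw [h0]
      refine Finset.sum_le_sum (fun v _ => ?_)
      by_cases h : f v = 0
      · simpa [h] using hdom v h
      · have : 1 ≤ f v := Nat.one_le_iff_ne_zero.mpr h
        omega
    have h2 : ∑ v : V, ∑ u ∈ Finset.univ.filter (fun u => D u v), f u
        = ∑ u : V, f u * (Finset.univ.filter (fun v => D u v)).card := by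
      simp only [Finset.sum_filter]
      rw [Finset.sum_comm]
      congr 1; funext u
      simp [Finset.sum_ite, mul_comm]
    calc 2 * Fintype.card V
        ≤ ∑ v : V, (2 * f v + ∑ u ∈ Finset.univ.filter (fun u => D u v), f u) := h1
      _ = 2 * w + ∑ u : V, f u * (Finset.univ.filter (fun v => D u v)).card := by
          rw [Finset.sum_add_distrib, ← Finset.mul_sum, hsum, h2]
      _ ≤ 2 * w + ∑ u : V, f u * Δ := by
          gcongr with u
          exact Finset.le_sup (f := fun v => (Finset.univ.filter (fun u => D v u)).card) (Finset.mem_univ u)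
      _ = w * (2 + Δ) := by rw [← Finset.sum_mul, hsum]; ring
  have hΔQ : (0:ℚ) < 2 + (Δ : ℚ) := by positivity
  rw [Nat.ceil_le, div_le_iff₀ hΔQ]
  have := key
  push_cast
  calc (2 * Fintype.card V : ℚ) ≤ (w * (2 + Δ) : ℕ) := by exact_mod_cast key
    _ = w * (2 + Δ) := by push_cast; ring
end

section
/- For any digraph D on n vertices, γ_I(D) ≤ n; moreover γ_I(D) = n if and only if every vertex of D has out-degree at most 1 and in-degree at most 1. -/
open Finset

-- lower bound: if all in/out degrees ≤ 1, every Italian dominating function has weight ≥ n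
lemma stmt12_lower {V : Type*} [Fintype V] (D : V → V → Prop) [DecidableRel D]
    (hdeg : ∀ v : V, (Finset.univ.filter (fun u => D v u)).card ≤ 1 ∧
        (Finset.univ.filter (fun u => D u v)).card ≤ 1)
    (f : V → ℕ) (hle : ∀ v, f v ≤ 2)
    (hdom : ∀ v, f v = 0 → 2 ≤ ∑ u ∈ Finset.univ.filter (fun u => D u v), f u) :
    Fintype.card V ≤ ∑ v, f v := by
  classical
  set Z : Finset V := univ.filter (fun v => f v = 0) with hZ
  set T : Finset V := univ.filter (fun v => f v = 2) with hT
  -- every zero vertex has an in-neighbour of value 2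
  have hex : ∀ z ∈ Z, ∃ u, D u z ∧ f u = 2 := by
    intro z hz
    simp only [hZ, mem_filter, mem_univ, true_and] at hz
    have h2 := hdom z hz
    have hc := (hdeg z).2
    set N := univ.filter (fun u => D u z) with hN
    interval_cases hcard : N.card
    · rw [Finset.card_eq_zero.mp hcard] at h2; simp at h2
    · obtain ⟨u, hu⟩ := Finset.card_eq_one.mp hcard
      rw [hu, Finset.sum_singleton] at h2
      have huN : u ∈ N := by rw [hu]; exact Finset.mem_singleton_self u
      simp only [hN, mem_filter] at huN
      exact ⟨u, huN.2, le_antisymm (hle u) h2⟩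
  choose! g hgD hgf using hex
  have hmaps : ∀ z ∈ Z, g z ∈ T := by
    intro z hz
    simp only [hT, mem_filter, mem_univ, true_and]
    exact hgf z hz
  have hinj : Set.InjOn g Z := by
    intro z1 hz1 z2 hz2 heq
    have hc := (hdeg (g z1)).1
    have h1 : z1 ∈ univ.filter (fun u => D (g z1) u) := by
      simp [hgD z1 hz1]
    have h2 : z2 ∈ univ.filter (fun u => D (g z1) u) := by
      simp [heq ▸ hgD z2 hz2]
    exact Finset.card_le_one.mp hc z1 h1 z2 h2
  have hcard : Z.card ≤ T.card := Finset.card_le_card_of_injOn g hmaps hinj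
  -- now count
  have hsplit : ∑ v, f v = ∑ v ∈ Z, f v + ∑ v ∈ Zᶜ, f v :=
    (Finset.sum_add_sum_compl Z f).symm
  have hZ0 : ∑ v ∈ Z, f v = 0 := by
    apply Finset.sum_eq_zero
    intro v hv
    simpa [hZ] using hv
  have hTsub : T ⊆ Zᶜ := by
    intro v hv
    simp only [hT, mem_filter, mem_univ, true_and] at hv
    simp [hZ, hv]
  have hlow : ∑ v ∈ Zᶜ, f v ≥ Zᶜ.card + T.card := by
    calc Zᶜ.card + T.card = ∑ v ∈ Zᶜ, 1 + ∑ v ∈ T, 1 := by simp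
    _ = ∑ v ∈ Zᶜ, 1 + ∑ v ∈ Zᶜ, (if v ∈ T then 1 else 0) := by
        rw [Finset.sum_ite_mem]
        congr 1
        rw [Finset.inter_eq_right.mpr hTsub]
    _ = ∑ v ∈ Zᶜ, (1 + if v ∈ T then 1 else 0) := by rw [Finset.sum_add_distrib]
    _ ≤ ∑ v ∈ Zᶜ, f v := by
        apply Finset.sum_le_sum
        intro v hv
        have hv0 : f v ≠ 0 := by simpa [hZ] using hv
        split
        · next h2 =>
            have : f v = 2 := by simpa [hT] using h2
            omega
        · omega
  have hcardV : Fintype.card V = Z.card + Zᶜ.card := by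
    rw [Finset.card_add_card_compl]
  omega

theorem stmt12 (V : Type*) [Fintype V] (D : V → V → Prop) [DecidableRel D]
    (hirr : Irreflexive D) :
    sInf {w : ℕ | ∃ f : V → ℕ, (∀ v, f v ≤ 2) ∧
        (∀ v, f v = 0 → 2 ≤ ∑ u ∈ Finset.univ.filter (fun u => D u v), f u) ∧
        ∑ v, f v = w} ≤ Fintype.card V ∧
    (sInf {w : ℕ | ∃ f : V → ℕ, (∀ v, f v ≤ 2) ∧
        (∀ v, f v = 0 → 2 ≤ ∑ u ∈ Finset.univ.filter (fun u => D u v), f u) ∧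
        ∑ v, f v = w} = Fintype.card V ↔
      ∀ v : V, (Finset.univ.filter (fun u => D v u)).card ≤ 1 ∧
        (Finset.univ.filter (fun u => D u v)).card ≤ 1) := by
  classical
  set S := {w : ℕ | ∃ f : V → ℕ, (∀ v, f v ≤ 2) ∧
        (∀ v, f v = 0 → 2 ≤ ∑ u ∈ Finset.univ.filter (fun u => D u v), f u) ∧
        ∑ v, f v = w} with hS
  have hmem : Fintype.card V ∈ S := by
    refine ⟨fun _ => 1, fun v => by norm_num, fun v hv => by simp at hv, by simp⟩
  have hub : sInf S ≤ Fintype.card V := Nat.sInf_le hmem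
  refine ⟨hub, ?_, ?_⟩
  · -- sInf = n → degrees ≤ 1
    intro hInf
    by_contra hcon
    push_neg at hcon
    obtain ⟨v, hv⟩ := hcon
    have hlt : ∃ w ∈ S, w < Fintype.card V := by
      by_cases hout' : (Finset.univ.filter (fun u => D v u)).card ≤ 1
      case neg =>
        have hout := lt_of_not_ge hout'
        obtain ⟨a, ha, b, hb, hab⟩ := Finset.one_lt_card.mp hout
        simp only [mem_filter, mem_univ, true_and] at ha hb
        have hav : a ≠ v := fun h => hirr v (h ▸ ha)
        have hbv : b ≠ v := fun h => hirr v (h ▸ hb)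
        set f : V → ℕ := fun x => if x = v then 2 else if x = a ∨ x = b then 0 else 1 with hf
        refine ⟨∑ x, f x, ⟨f, ?_, ?_, rfl⟩, ?_⟩
        · intro x
          by_cases h1 : x = v <;> by_cases h2 : x = a ∨ x = b <;>
            simp [hf, h1, h2]
        · intro x hx
          simp only [hf] at hx
          have hxab : x = a ∨ x = b := by
            by_contra h
            simp only [h, if_false] at hx
            split at hx <;> omega
          have hvx : D v x := by rcases hxab with h | h <;> subst h <;> assumption
          have hvmem : v ∈ univ.filter (fun u => D u x) := by simp [hvx]
          calc (2 : ℕ) = f v := by simp [hf]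
          _ ≤ ∑ u ∈ univ.filter (fun u => D u x), f u :=
              Finset.single_le_sum (fun i _ => Nat.zero_le _) hvmem
        · -- weight < n
          have hsum : ∑ x, f x + 1 ≤ ∑ x : V, 1 := by
            have h1 : ∑ x, f x = f v + ∑ x ∈ univ.erase v, f x := by
              rw [Finset.add_sum_erase _ f (mem_univ v)]
            have h2 : (∑ x : V, 1) = 1 + ∑ x ∈ univ.erase v, 1 := by
              rw [Finset.add_sum_erase _ (fun _ => 1) (mem_univ v)]
            have h3 : ∑ x ∈ univ.erase v, f x + 2 ≤ ∑ x ∈ univ.erase v, (1 : ℕ) := by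
              have ha' : a ∈ univ.erase v := by simp [hav]
              have hb' : b ∈ (univ.erase v).erase a := by simp [hbv, hab.symm]
              rw [← Finset.add_sum_erase _ f ha', ← Finset.add_sum_erase _ (fun _ => 1) ha',
                ← Finset.add_sum_erase _ f hb', ← Finset.add_sum_erase _ (fun _ => 1) hb']
              have hfa : f a = 0 := by simp [hf, hav]
              have hfb : f b = 0 := by simp [hf, hbv]
              have hrest : ∑ x ∈ ((univ.erase v).erase a).erase b, f x ≤
                  ∑ x ∈ ((univ.erase v).erase a).erase b, (1:ℕ) := by
                apply Finset.sum_le_sum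
                intro x hx
                simp only [Finset.mem_erase, Finset.mem_univ, and_true] at hx
                simp [hf, hx.1, hx.2.1, hx.2.2]
              omega
            have hfv : f v = 2 := by simp [hf]
            omega
          simpa [Finset.card_univ] using hsum
      case pos =>
        have hin := hv hout'
        obtain ⟨a, ha, b, hb, hab⟩ := Finset.one_lt_card.mp hin
        simp only [mem_filter, mem_univ, true_and] at ha hb
        have hav : a ≠ v := fun h => hirr v (h ▸ ha)
        have hbv : b ≠ v := fun h => hirr v (h ▸ hb)
        set f : V → ℕ := fun x => if x = v then 0 else 1 with hf
        refine ⟨∑ x, f x, ⟨f, ?_, ?_, rfl⟩, ?_⟩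
        · intro x; simp only [hf]; split <;> omega
        · intro x hx
          simp only [hf] at hx
          have hxv : x = v := by by_contra h; simp [h] at hx
          subst hxv
          have hsub : {a, b} ⊆ univ.filter (fun u => D u x) := by
            intro y hy
            simp only [Finset.mem_insert, Finset.mem_singleton] at hy
            rcases hy with h | h <;> subst h <;> simp [ha, hb]
          calc (2 : ℕ) = ∑ u ∈ ({a, b} : Finset V), f u := by
                rw [Finset.sum_pair hab]
                simp [hf, hav, hbv]
          _ ≤ ∑ u ∈ univ.filter (fun u => D u x), f u :=
              Finset.sum_le_sum_of_subset hsub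
        · have : ∑ x, f x = ∑ x ∈ univ.erase v, f x := by
            rw [← Finset.add_sum_erase _ f (mem_univ v)]
            simp [hf]
          rw [this]
          calc ∑ x ∈ univ.erase v, f x ≤ ∑ x ∈ univ.erase v, 1 :=
                Finset.sum_le_sum (fun x _ => by simp only [hf]; split <;> omega)
          _ = (univ.erase v).card := by simp
          _ < Fintype.card V := by
              rw [Finset.card_erase_of_mem (mem_univ v), Finset.card_univ]
              have : 0 < Fintype.card V := Fintype.card_pos_iff.mpr ⟨v⟩
              omega
    obtain ⟨w, hwS, hwlt⟩ := hlt
    have := Nat.sInf_le hwS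
    omega
  · -- degrees ≤ 1 → sInf = n
    intro hdeg
    refine le_antisymm hub ?_
    apply le_csInf ⟨_, hmem⟩
    rintro w ⟨f, hle, hdom, hsum⟩
    rw [← hsum]
    exact stmt12_lower D hdeg f hle hdom
end

section
/- The Italian domination number of the directed cycle C_n (n ≥ 2) equals n. -/
theorem stmt13 (n : ℕ) [NeZero n] (hn : 2 ≤ n) :
    IsLeast {w : ℕ | ∃ f : ZMod n → ℕ, (∀ v, f v ≤ 2) ∧
        (∀ v, f v = 0 → 2 ≤ f (v - 1)) ∧ ∑ v, f v = w} n := by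
  classical
  constructor
  · exact ⟨fun _ => 1, fun v => by norm_num, fun v h => by simp at h,
      by simp [Finset.sum_const, ZMod.card]⟩
  · rintro w ⟨f, hf2, hf0, rfl⟩
    set Z := Finset.univ.filter (fun v : ZMod n => f v = 0) with hZ
    set P := Finset.univ.filter (fun v : ZMod n => 1 ≤ f v) with hP
    set A := Finset.univ.filter (fun v : ZMod n => 2 ≤ f v) with hA
    have hZA : Z.card ≤ A.card := by
      apply Finset.card_le_card_of_injOn (fun v => v - 1)
      · intro v hv
        simp only [hZ, hA, Finset.mem_filter, Finset.mem_univ, true_and] at *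
        simpa using hf0 v (by simpa using hv)
      · intro a _ b _ h
        simpa using h
    have hsum : P.card + A.card ≤ ∑ v, f v := by
      have : ∀ v : ZMod n, (if 1 ≤ f v then 1 else 0) + (if 2 ≤ f v then 1 else 0) ≤ f v := by
        intro v; split_ifs <;> omega
      calc P.card + A.card
          = ∑ v, ((if 1 ≤ f v then 1 else 0) + (if 2 ≤ f v then 1 else 0)) := by
            rw [Finset.sum_add_distrib, hP, hA, Finset.card_filter, Finset.card_filter]
        _ ≤ ∑ v, f v := Finset.sum_le_sum fun v _ => this v
    have hPZ : Z.card + P.card = n := by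
      have := Finset.card_filter_add_card_filter_not
        (s := (Finset.univ : Finset (ZMod n))) (p := fun v => f v = 0)
      simp only [hZ, hP, Finset.card_univ, ZMod.card] at *
      have hpe : (Finset.univ.filter (fun v : ZMod n => ¬ f v = 0)) =
          (Finset.univ.filter (fun v : ZMod n => 1 ≤ f v)) := by
        apply Finset.filter_congr; intro v _; constructor <;> omega
      rw [hpe] at this
      exact this
    omega
end

section
/- For n odd, n ≥ 3, the Italian domination number of the directed Cartesian product C_2 □ C_n equals n + 1. -/
lemma aux_sub_one_val {n : ℕ} [NeZero n] (j : ZMod n) (hj : j ≠ 0) : (j - 1).val = j.val - 1 := by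
  have hpos : 0 < j.val := by
    rcases Nat.eq_zero_or_pos j.val with h | h
    · exact absurd ((ZMod.val_eq_zero j).mp h) hj
    · exact h
  have hlt : j.val - 1 < n := lt_of_le_of_lt (Nat.sub_le _ _) (ZMod.val_lt j)
  have h2 : ((j.val - 1 : ℕ) : ZMod n) + 1 = j := by
    have h3 : (j.val - 1) + 1 = j.val := Nat.sub_add_cancel hpos
    calc ((j.val - 1 : ℕ) : ZMod n) + 1 = (((j.val - 1) + 1 : ℕ) : ZMod n) := by push_cast; ring
      _ = ((j.val : ℕ) : ZMod n) := by rw [h3]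
      _ = j := by rw [ZMod.natCast_val, ZMod.cast_id]
  have hc : j - 1 = ((j.val - 1 : ℕ) : ZMod n) := (eq_sub_iff_add_eq.mpr h2).symm
  rw [hc, ZMod.val_cast_of_lt hlt]

lemma aux_val_pos {n : ℕ} [NeZero n] (j : ZMod n) (hj : j ≠ 0) : 0 < j.val := by
  rcases Nat.eq_zero_or_pos j.val with h | h
  · exact absurd ((ZMod.val_eq_zero j).mp h) hj
  · exact h

lemma aux_zmod2_cases (i : ZMod 2) : i = 0 ∨ i = 1 := by revert i; decide

lemma aux_sum_shift {n : ℕ} [NeZero n] (g : ZMod n → ℕ) : ∑ j, g (j - 1) = ∑ j, g j :=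
  Fintype.sum_equiv (Equiv.subRight 1) _ _ (fun _ => rfl)

lemma aux_sum_prod2 {n : ℕ} [NeZero n] (f : ZMod 2 × ZMod n → ℕ) :
    ∑ v, f v = ∑ j, (f (0, j) + f (1, j)) := by
  calc ∑ v, f v = ∑ i : ZMod 2, ∑ j, f (i, j) := Fintype.sum_prod_type f
    _ = (∑ j, f (0, j)) + (∑ j, f (1, j)) := Fin.sum_univ_two _
    _ = ∑ j, (f (0, j) + f (1, j)) := Finset.sum_add_distrib.symm

lemma aux_lower {n : ℕ} [NeZero n] (hno : Odd n) (a b : ZMod n → ℕ)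
    (h0 : ∀ j, a j = 0 → 2 ≤ b j + a (j - 1))
    (h1 : ∀ j, b j = 0 → 2 ≤ a j + b (j - 1)) :
    n + 1 ≤ ∑ j, (a j + b j) := by
  by_contra hS
  push_neg at hS
  have hSle : ∑ j, (a j + b j) ≤ n := by omega
  have key : ∀ j, 2 ≤ (a j + b j) + (a (j - 1) + b (j - 1)) := by
    intro j
    rcases Nat.eq_zero_or_pos (a j) with haj | haj <;>
      rcases Nat.eq_zero_or_pos (b j) with hbj | hbj
    · have := h0 j haj; omega
    · have := h0 j haj; omega
    · have := h1 j hbj; omega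
    · omega
  have hshift : ∑ j, (a (j - 1) + b (j - 1)) = ∑ j, (a j + b j) :=
    aux_sum_shift (fun j => a j + b j)
  have hsum2 : ∑ j, ((a j + b j) + (a (j - 1) + b (j - 1)))
      = 2 * ∑ j, (a j + b j) := by
    rw [Finset.sum_add_distrib, hshift]; ring
  have hconst : ∑ _j : ZMod n, (2 : ℕ) = 2 * n := by
    simp [Finset.sum_const, Finset.card_univ, ZMod.card, mul_comm]
  have hle : ∑ _j : ZMod n, (2 : ℕ) ≤ ∑ j, ((a j + b j) + (a (j - 1) + b (j - 1))) :=
    Finset.sum_le_sum (fun j _ => key j)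
  have hge : ∑ j, ((a j + b j) + (a (j - 1) + b (j - 1))) ≤ ∑ _j : ZMod n, (2 : ℕ) := by
    rw [hsum2, hconst]; omega
  have heqsum : ∑ _j : ZMod n, (2 : ℕ) = ∑ j, ((a j + b j) + (a (j - 1) + b (j - 1))) :=
    le_antisymm hle hge
  have heq : ∀ j : ZMod n, (a j + b j) + (a (j - 1) + b (j - 1)) = 2 := by
    intro j
    have := (Finset.sum_eq_sum_iff_of_le (fun i (_ : i ∈ Finset.univ) => key i)).mp heqsum
    exact (this j (Finset.mem_univ j)).symm
  have hnz : ∀ j : ZMod n, a j + b j ≠ 0 := by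
    intro j h
    have ha : a j = 0 := by omega
    have hb : b j = 0 := by omega
    have := h0 j ha
    have := h1 j hb
    have := heq j
    omega
  have hone : ∀ j : ZMod n, a j + b j = 1 := by
    intro j
    have := heq j
    have := hnz j
    have := hnz (j - 1)
    omega
  have hpar : ∀ j : ZMod n, a j + a (j - 1) = 1 := by
    intro j
    have hc := hone j
    have hc' := hone (j - 1)
    rcases Nat.eq_zero_or_pos (a j) with h | h
    · have := h0 j h; omega
    · have := h1 j (by omega); omega
  have hfin : ∑ j : ZMod n, (a j + a (j - 1)) = n := by
    rw [Finset.sum_congr rfl (fun j _ => hpar j)]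
    simp [Finset.sum_const, Finset.card_univ, ZMod.card]
  have hsplit : ∑ j : ZMod n, (a j + a (j - 1)) = 2 * ∑ j, a j := by
    rw [Finset.sum_add_distrib, aux_sum_shift a]; ring
  obtain ⟨k, hk⟩ := hno
  omega

theorem stmt14 (n : ℕ) [NeZero n] (hn : 3 ≤ n) (hno : Odd n) :
    IsLeast (weights 2 n) (n + 1) := by
  constructor
  · -- membership : explicit construction
    refine ⟨fun v => if v.1 = 0 then (if v.2.val % 2 = 0 then 1 else 0)
        else (if v.2.val % 2 = 0 ∧ v.2 ≠ 0 then 0 else 1), ⟨?_, ?_⟩, ?_⟩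
    · intro v; dsimp only; split <;> split <;> omega
    · rintro ⟨i, j⟩ hv
      rcases aux_zmod2_cases i with h1 | h1 <;> subst h1 <;> dsimp only at hv ⊢
      · rw [if_pos rfl] at hv
        have hodd : j.val % 2 = 1 := by
          by_contra h
          rw [if_pos (by omega : j.val % 2 = 0)] at hv; omega
        have hne : j ≠ 0 := by
          intro h; rw [h, ZMod.val_zero] at hodd; omega
        have hval := aux_sub_one_val j hne
        have hpos := aux_val_pos j hne
        rw [show ((0 : ZMod 2) - 1 = 1) from by decide,
          if_neg (show ¬ ((1 : ZMod 2) = 0) from by decide),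
          if_neg (fun hb : j.val % 2 = 0 ∧ j ≠ 0 => by omega),
          if_pos rfl, if_pos (show (j - 1).val % 2 = 0 by omega)]
      · rw [if_neg (show ¬ ((1 : ZMod 2) = 0) from by decide)] at hv
        have hc : j.val % 2 = 0 ∧ j ≠ 0 := by
          by_contra h; rw [if_neg h] at hv; omega
        have hval := aux_sub_one_val j hc.2
        have hpos := aux_val_pos j hc.2
        rw [show ((1 : ZMod 2) - 1 = 0) from by decide,
          if_pos rfl, if_pos hc.1,
          if_neg (show ¬ ((1 : ZMod 2) = 0) from by decide),
          if_neg (fun hb : (j - 1).val % 2 = 0 ∧ j - 1 ≠ 0 => by omega)]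
    · rw [aux_sum_prod2]
      have hpt : ∀ j : ZMod n,
          ((if (0 : ZMod 2) = 0 then (if j.val % 2 = 0 then 1 else 0)
            else (if j.val % 2 = 0 ∧ j ≠ 0 then 0 else 1)) +
          (if (1 : ZMod 2) = 0 then (if j.val % 2 = 0 then 1 else 0)
            else (if j.val % 2 = 0 ∧ j ≠ 0 then 0 else 1)))
          = 1 + (if j = 0 then 1 else 0) := by
        intro j
        rw [if_pos rfl, if_neg (show ¬ ((1 : ZMod 2) = 0) from by decide)]
        by_cases hj : j = 0
        · subst hj; simp [ZMod.val_zero]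
        · by_cases hp : j.val % 2 = 0 <;> simp [hj, hp]
      rw [Finset.sum_congr rfl (fun j _ => hpt j), Finset.sum_add_distrib]
      simp [Finset.sum_const, Finset.card_univ, ZMod.card, Finset.sum_ite_eq']
  · rintro w ⟨f, ⟨hb, hdom⟩, rfl⟩
    rw [aux_sum_prod2]
    refine aux_lower hno (fun j => f (0, j)) (fun j => f (1, j)) ?_ ?_
    · intro j hj
      have := hdom (0, j) hj
      simpa [show ((0 : ZMod 2) - 1 = 1) from by decide] using this
    · intro j hj
      have := hdom (1, j) hj
      simpa [show ((1 : ZMod 2) - 1 = 0) from by decide] using this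
end

section
/- For n ≥ 3, the Italian domination number of the directed Cartesian product C_3 □ C_n equals 2n. -/
/-! ### Auxiliary material -/


def P3 (a b c : ℕ) : ℤ :=
  min 2 (max ((a : ℤ) + b + c - 2)
    ((if a = 2 then 1 else 0) + (if b = 2 then 1 else 0) + (if c = 2 then 1 else 0)))

lemma keyFin : ∀ a b c a' b' c' : Fin 3,
    (a' = 0 → 2 ≤ c'.val + a.val) → (b' = 0 → 2 ≤ a'.val + b.val) →
    (c' = 0 → 2 ≤ b'.val + c.val) →
    P3 a'.val b'.val c'.val ≤ P3 a.val b.val c.val + ((a'.val : ℤ) + b'.val + c'.val) - 2 := by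
  decide

lemma key (a b c a' b' c' : ℕ) (ha : a < 3) (hb : b < 3) (hc : c < 3)
    (ha' : a' < 3) (hb' : b' < 3) (hc' : c' < 3)
    (h1 : a' = 0 → 2 ≤ c' + a) (h2 : b' = 0 → 2 ≤ a' + b) (h3 : c' = 0 → 2 ≤ b' + c) :
    P3 a' b' c' ≤ P3 a b c + ((a' : ℤ) + b' + c') - 2 :=
  keyFin ⟨a, ha⟩ ⟨b, hb⟩ ⟨c, hc⟩ ⟨a', ha'⟩ ⟨b', hb'⟩ ⟨c', hc'⟩
    (fun h => h1 (congrArg Fin.val h)) (fun h => h2 (congrArg Fin.val h))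
    (fun h => h3 (congrArg Fin.val h))

lemma zmod3_sum {M : Type*} [AddCommMonoid M] (g : ZMod 3 → M) :
    ∑ i, g i = g 0 + g 1 + g 2 := by
  show ∑ i : Fin 3, g i = _
  exact Fin.sum_univ_three g

lemma sum3 : ∀ x : ZMod 3, (∑ i : ZMod 3, if i = x ∨ i = x + 1 then (1:ℕ) else 0) = 2 := by
  decide

def A (n : ℕ) [NeZero n] (j : ZMod n) : ZMod 3 :=
  if n % 3 = 1 ∧ j.val = n - 1 then 1 else (j.val : ZMod 3)

lemma hstep (n : ℕ) [NeZero n] (hn : 3 ≤ n) (j : ZMod n) : A n j ≠ A n (j - 1) := by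
  have hjv : j.val < n := ZMod.val_lt j
  by_cases hj0 : j.val = 0
  · have hj : j = 0 := by rwa [ZMod.val_eq_zero] at hj0
    have hsub : j - 1 = ((n - 1 : ℕ) : ZMod n) := by
      rw [hj]
      push_cast [Nat.cast_sub (by omega : 1 ≤ n)]
      simp [ZMod.natCast_self]
    have hv : (j - 1).val = n - 1 := by
      rw [hsub, ZMod.val_cast_of_lt (by omega)]
    rw [A, A, hj0, hv]
    rw [if_neg (show ¬(n % 3 = 1 ∧ (0:ℕ) = n - 1) by omega)]
    by_cases hm : n % 3 = 1
    · rw [if_pos ⟨hm, rfl⟩]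
      decide
    · rw [if_neg (fun hc => hm hc.1)]
      intro h2
      have h3 : (0:ℕ) % 3 = (n-1) % 3 := (ZMod.natCast_eq_natCast_iff _ _ _).mp h2
      omega
  · set k := j.val with hk
    have hj : ((k : ℕ) : ZMod n) = j := ZMod.natCast_rightInverse j
    have hsub : j - 1 = ((k - 1 : ℕ) : ZMod n) := by
      rw [← hj]
      push_cast [Nat.cast_sub (by omega : 1 ≤ k)]
      ring
    have hv : (j - 1).val = k - 1 := by
      rw [hsub, ZMod.val_cast_of_lt (by omega)]
    rw [A, A, hv, ← hk]
    rw [if_neg (show ¬(n % 3 = 1 ∧ k - 1 = n - 1) by omega)]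
    by_cases hs : n % 3 = 1 ∧ k = n - 1
    · rw [if_pos hs]
      rw [← ZMod.natCast_mod (k-1) 3, (show (k-1) % 3 = 2 by omega)]
      decide
    · rw [if_neg hs]
      intro h2
      have h3 : k % 3 = (k - 1) % 3 := (ZMod.natCast_eq_natCast_iff _ _ _).mp h2
      omega

lemma two_of_ne : ∀ i x y : ZMod 3, i ≠ x → i ≠ x + 1 → x ≠ y →
    i = x + 2 ∧ (i = y ∨ i = y + 1) := by decide

theorem stmt15 (n : ℕ) [NeZero n] (hn : 3 ≤ n) :
    IsLeast (weights 3 n) (2 * n) := by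
  constructor
  · -- membership: the explicit construction
    refine ⟨fun v => if v.1 = A n v.2 ∨ v.1 = A n v.2 + 1 then 1 else 0, ⟨?_, ?_⟩, ?_⟩
    · intro v; dsimp only; split <;> omega
    · rintro ⟨i, j⟩ hv
      dsimp only at hv ⊢
      have hne : ¬ (i = A n j ∨ i = A n j + 1) := by
        intro h; rw [if_pos h] at hv; omega
      push_neg at hne
      obtain ⟨hi, hcov⟩ := two_of_ne i (A n j) (A n (j-1)) hne.1 hne.2 (hstep n hn j)
      have e1 : i - 1 = A n j + 1 := by rw [hi]; ring
      rw [if_pos (by rw [e1]; right; rfl), if_pos hcov]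
    · rw [Fintype.sum_prod_type_right]
      have : ∀ j : ZMod n,
          (∑ i : ZMod 3, if i = A n j ∨ i = A n j + 1 then (1:ℕ) else 0) = 2 :=
        fun j => sum3 (A n j)
      rw [Finset.sum_congr rfl (fun j _ => this j), Finset.sum_const,
        Finset.card_univ, ZMod.card, smul_eq_mul, Nat.mul_comm]
  · -- lower bound
    rintro w ⟨f, ⟨hle, hdom⟩, rfl⟩
    set g : ZMod n → ℤ := fun j => P3 (f (0,j)) (f (1,j)) (f (2,j)) with hg
    have hcol : ∀ j : ZMod n,
        (2 : ℤ) + g j - g (j - 1) ≤ (f (0,j) : ℤ) + f (1,j) + f (2,j) := by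
      intro j
      have h0 := hdom (0, j)
      have h1 := hdom (1, j)
      have h2 := hdom (2, j)
      dsimp only at h0 h1 h2
      rw [show (0:ZMod 3) - 1 = 2 by decide] at h0
      rw [show (1:ZMod 3) - 1 = 0 by decide] at h1
      rw [show (2:ZMod 3) - 1 = 1 by decide] at h2
      have hk := key (f (0,j-1)) (f (1,j-1)) (f (2,j-1)) (f (0,j)) (f (1,j)) (f (2,j))
        (by have := hle (0,j-1); omega) (by have := hle (1,j-1); omega)
        (by have := hle (2,j-1); omega) (by have := hle (0,j); omega)
        (by have := hle (1,j); omega) (by have := hle (2,j); omega)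
        h0 h1 h2
      simp only [hg]
      linarith
    have hsumeq : (∑ v, (f v : ℤ)) = ∑ j : ZMod n, ((f (0,j):ℤ) + f (1,j) + f (2,j)) := by
      rw [Fintype.sum_prod_type_right]
      exact Finset.sum_congr rfl fun j _ => zmod3_sum (fun i => (f (i,j):ℤ))
    have htel : ∑ j : ZMod n, g (j - 1) = ∑ j, g j :=
      Fintype.sum_equiv (Equiv.subRight (1 : ZMod n)) _ _ (fun _ => rfl)
    have hfinal : (2 * n : ℤ) ≤ ∑ v, (f v : ℤ) := by
      rw [hsumeq]
      have hsum := Finset.sum_le_sum (s := Finset.univ) (fun j _ => hcol j)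
      have hlhs : ∑ j : ZMod n, ((2 : ℤ) + g j - g (j - 1)) = 2 * n := by
        simp only [add_sub_assoc, Finset.sum_add_distrib, Finset.sum_sub_distrib, htel,
          Finset.sum_const, Finset.card_univ, ZMod.card, smul_eq_mul]
        ring
      calc (2 * n : ℤ) = ∑ j : ZMod n, ((2 : ℤ) + g j - g (j - 1)) := hlhs.symm
        _ ≤ _ := hsum
    have : ((2 * n : ℕ) : ℤ) ≤ ((∑ v, f v : ℕ) : ℤ) := by push_cast; exact hfinal
    exact_mod_cast this
end

section
/- For n odd, n ≥ 3, the Italian domination number of the directed Cartesian product C_4 □ C_n equals 2n + 2. -/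
namespace IDomAux

abbrev T4 := ℕ × ℕ × ℕ × ℕ

def sum4 (a : T4) : ℕ := a.1 + a.2.1 + a.2.2.1 + a.2.2.2

def Tt (a b : T4) : Prop :=
  (b.1 = 0 → 2 ≤ b.2.2.2 + a.1) ∧ (b.2.1 = 0 → 2 ≤ b.1 + a.2.1) ∧
  (b.2.2.1 = 0 → 2 ≤ b.2.1 + a.2.2.1) ∧ (b.2.2.2 = 0 → 2 ≤ b.2.2.1 + a.2.2.2)

def Bd (a : T4) : Prop := a.1 ≤ 2 ∧ a.2.1 ≤ 2 ∧ a.2.2.1 ≤ 2 ∧ a.2.2.2 ≤ 2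

def qA : T4 := (0,1,0,1)
def qB : T4 := (1,0,1,0)

lemma qA_ne_qB : qA ≠ qB := by decide

lemma factG1 (a b : T4) (ha : Bd a) (hb : Bd b) (h : Tt a b) : 4 ≤ sum4 a + sum4 b := by
  obtain ⟨a0, a1, a2, a3⟩ := a
  obtain ⟨b0, b1, b2, b3⟩ := b
  simp only [Tt, Bd, sum4, true_implies] at *
  omega

lemma factG6 (x y z : T4) (hy : Bd y) (hxy : Tt x y) (hyz : Tt y z)
    (hx : x = qA ∨ x = qB) (hz : z = qA ∨ z = qB) (h3 : sum4 y = 3) : x = z := by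
  obtain ⟨y0, y1, y2, y3⟩ := y
  rcases hx with rfl | rfl <;> rcases hz with rfl | rfl <;>
    [skip; exfalso; exfalso; skip] <;>
    first
      | rfl
      | (simp only [Tt, Bd, sum4, qA, qB, true_implies] at *; omega)

lemma factG7 (a b : T4) (ha : Bd a) (hb : Bd b) (h : Tt a b)
    (h2 : sum4 a = 2) (h2' : sum4 b = 2) :
    (a = qA ∧ b = qB) ∨ (a = qB ∧ b = qA) := by
  obtain ⟨a0, a1, a2, a3⟩ := a
  obtain ⟨b0, b1, b2, b3⟩ := b
  simp only [Tt, Bd, sum4, qA, qB, Prod.mk.injEq, true_implies] at *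
  omega

lemma factG8 (a b : T4) (ha : Bd a) (hb : Bd b) (h : Tt a b)
    (h4 : sum4 a + sum4 b = 4) : sum4 a ≤ 2 := by
  obtain ⟨a0, a1, a2, a3⟩ := a
  obtain ⟨b0, b1, b2, b3⟩ := b
  simp only [Tt, Bd, sum4, true_implies] at *
  omega

lemma twostep (W : ℕ → ℕ) :
    ∀ L u, (∀ m, u ≤ m → m < u + 2*L → W m + W (m+1) = 4) → W (u + 2*L) = W u := by
  intro L
  induction L with
  | zero => intro u _; simp
  | succ L ih =>
    intro u h
    have h1 := h (u + 2*L) (by omega) (by omega)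
    have h2 := h (u + 2*L + 1) (by omega) (by omega)
    have h3 := ih u (fun m hm hm2 => h m hm (by omega))
    have e : u + 2*(L+1) = (u + 2*L + 1) + 1 := by omega
    rw [e]
    omega

def PF (C : ℕ → T4) (j : ℕ) : Prop :=
  (C j = qA ∧ C (j+1) = qB) ∨ (C j = qB ∧ C (j+1) = qA)

lemma altrun (C : ℕ → T4) :
    ∀ L u, (∀ m, u ≤ m → m < u + 2*L → PF C m) → C (u + 2*L) = C u := by
  intro L
  induction L with
  | zero => intro u _; simp
  | succ L ih =>
    intro u h
    have h1 := h (u + 2*L) (by omega) (by omega)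
    have h2 := h (u + 2*L + 1) (by omega) (by omega)
    have h3 := ih u (fun m hm hm2 => h m hm (by omega))
    have e : u + 2*(L+1) = (u + 2*L + 1) + 1 := by omega
    rw [e]
    rcases h1 with ⟨e1, e2⟩ | ⟨e1, e2⟩ <;> rcases h2 with ⟨e3, e4⟩ | ⟨e3, e4⟩
    · exact absurd (e3.symm.trans e2) qA_ne_qB
    · rw [e4, ← e1]; exact h3
    · rw [e4, ← e1]; exact h3
    · exact absurd (e3.symm.trans e2) (fun hh => qA_ne_qB hh.symm)

lemma main_lower (n : ℕ) (hn : 3 ≤ n) (hno : Odd n)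
    (C : ℕ → T4) (hper : ∀ j, C (j + n) = C j)
    (hB : ∀ j, Bd (C j)) (hT : ∀ j, Tt (C j) (C (j+1))) :
    2 * n + 2 ≤ ∑ j ∈ Finset.range n, sum4 (C j) := by
  by_contra hcon
  push_neg at hcon
  set W : ℕ → ℕ := fun j => sum4 (C j) with hW
  have hS : ∑ j ∈ Finset.range n, W j ≤ 2*n+1 := Nat.lt_succ_iff.mp hcon
  have hWper : ∀ j, W (j+n) = W j := by
    intro j; show sum4 (C (j+n)) = sum4 (C j); rw [hper]
  have hG1 : ∀ j, 4 ≤ W j + W (j+1) := fun j => factG1 _ _ (hB j) (hB (j+1)) (hT j)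
  have hshift : ∀ a, ∑ t ∈ Finset.range n, W (a+t) = ∑ t ∈ Finset.range n, W t := by
    intro a
    induction a with
    | zero => simp
    | succ a ih =>
      have h1 : ∑ t ∈ Finset.range (n+1), W (a+t)
          = (∑ t ∈ Finset.range n, W (a+(t+1))) + W (a+0) := Finset.sum_range_succ' _ n
      have h2 : ∑ t ∈ Finset.range (n+1), W (a+t)
          = (∑ t ∈ Finset.range n, W (a+t)) + W (a+n) := Finset.sum_range_succ _ n
      have h3 : ∑ t ∈ Finset.range n, W (a+(t+1)) = ∑ t ∈ Finset.range n, W (a+1+t) :=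
        Finset.sum_congr rfl (fun t _ => by rw [show a+(t+1) = a+1+t by omega])
      rw [h3] at h1
      have h4 := hWper a
      simp only [Nat.add_zero] at h1
      omega
  have hTot : ∀ a, ∑ t ∈ Finset.range n, (W (a+t) + W (a+t+1))
      = 2 * ∑ t ∈ Finset.range n, W t := by
    intro a
    rw [Finset.sum_add_distrib]
    have h2 : ∑ t ∈ Finset.range n, W (a+t+1) = ∑ t ∈ Finset.range n, W ((a+1)+t) :=
      Finset.sum_congr rfl (fun t _ => by rw [show a+t+1 = a+1+t by omega])
    rw [hshift a, h2, hshift (a+1)]; ring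
  have hex : ∀ a (A : Finset ℕ), A ⊆ Finset.range n →
      (∑ t ∈ A, (W (a+t) + W (a+t+1))) + 4 * (n - A.card) ≤ 4*n + 2 := by
    intro a A hA
    have hsplit : (∑ t ∈ Finset.range n \ A, (W (a+t) + W (a+t+1)))
        + ∑ t ∈ A, (W (a+t) + W (a+t+1))
        = ∑ t ∈ Finset.range n, (W (a+t) + W (a+t+1)) := Finset.sum_sdiff hA
    have hcard : (Finset.range n \ A).card = n - A.card := by
      rw [Finset.card_sdiff_of_subset hA, Finset.card_range]
    have hlow : (Finset.range n \ A).card • 4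
        ≤ ∑ t ∈ Finset.range n \ A, (W (a+t) + W (a+t+1)) :=
      Finset.card_nsmul_le_sum _ _ _ (fun t _ => hG1 (a+t))
    rw [smul_eq_mul, hcard] at hlow
    have hup : ∑ t ∈ Finset.range n, (W (a+t) + W (a+t+1)) ≤ 4*n+2 := by
      rw [hTot a]; omega
    omega
  by_cases hc1 : ∀ j, j < n → W j + W (j+1) = 4
  · -- Case 1 : all pairs tight
    obtain ⟨k, hk⟩ := hno
    have hWn1 : W (1 + 2*k) = W 1 := twostep W k 1 (fun m hm1 hm2 => hc1 m (by omega))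
    rw [show 1 + 2*k = n by omega] at hWn1
    have hW0n : W (0 + n) = W 0 := hWper 0
    rw [show 0 + n = n by omega] at hW0n
    have h01 : W 0 + W 1 = 4 := hc1 0 (by omega)
    have hall : ∀ j, j ≤ n → W j = 2 := by
      intro j hj
      rcases Nat.even_or_odd j with ⟨l, hl⟩ | ⟨l, hl⟩
      · have := twostep W l 0 (fun m hm1 hm2 => hc1 m (by omega))
        rw [show 0 + 2*l = j by omega] at this
        omega
      · have := twostep W l 1 (fun m hm1 hm2 => hc1 m (by omega))
        rw [show 1 + 2*l = j by omega] at this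
        omega
    have hpf : ∀ j, j < n → PF C j := by
      intro j hj
      exact factG7 (C j) (C (j+1)) (hB j) (hB (j+1)) (hT j)
        (hall j (by omega)) (hall (j+1) (by omega))
    have hrun := altrun C k 1 (fun m h1 h2 => hpf m (by omega))
    rw [show 1 + 2*k = n by omega] at hrun
    have hCn : C (0 + n) = C 0 := hper 0
    rw [show 0 + n = n by omega] at hCn
    rcases hpf 0 (by omega) with ⟨e1, e2⟩ | ⟨e1, e2⟩ <;>
      rw [show 0 + 1 = 1 by omega] at e2
    · exact qA_ne_qB (by rw [← e1, ← hCn, hrun, e2])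
    · exact qA_ne_qB (by rw [← e2, ← hrun, hCn, e1])
  · push_neg at hc1
    obtain ⟨j0, hj0n, hj0ne⟩ := hc1
    have hj05 : 5 ≤ W j0 + W (j0+1) := by have := hG1 j0; omega
    obtain ⟨k, hk⟩ := hno
    have hj0per := hWper j0
    by_cases hc2 : ∀ t, 1 ≤ t → t < n → W (j0+t) + W (j0+t+1) = 4
    · -- Case 2a
      have h2 := twostep W k (j0+1) (fun m h1 h2 => by
        have e : m = j0 + (m - j0) := by omega
        rw [e]; exact hc2 (m - j0) (by omega) (by omega))
      rw [show j0+1+2*k = j0+n by omega] at h2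
      have h4 : W (j0+1) + W (j0+2) = 4 := hc2 1 (by omega) (by omega)
      have h5 : W (j0+1) ≤ 2 := factG8 _ _ (hB (j0+1)) (hB (j0+2)) (hT (j0+1)) h4
      omega
    · push_neg at hc2
      obtain ⟨t0, ht01, ht0n, ht0ne⟩ := hc2
      have ht05 : 5 ≤ W (j0+t0) + W (j0+t0+1) := by have := hG1 (j0+t0); omega
      have h55 : W j0 + W (j0+1) = 5 ∧ W (j0+t0) + W (j0+t0+1) = 5 := by
        have hsub : ({0, t0} : Finset ℕ) ⊆ Finset.range n := by
          intro x hx; simp only [Finset.mem_insert, Finset.mem_singleton] at hx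
          rcases hx with rfl | rfl <;> simp only [Finset.mem_range] <;> omega
        have hp := hex j0 {0, t0} hsub
        rw [Finset.sum_pair (by omega : (0:ℕ) ≠ t0)] at hp
        rw [Finset.card_pair (by omega : (0:ℕ) ≠ t0)] at hp
        simp only [Nat.add_zero] at hp
        omega
      have htight : ∀ m, j0+1 ≤ m → m < j0+n → m ≠ j0+t0 → W m + W (m+1) = 4 := by
        intro m h1 h2 h3
        have hsub : ({0, t0, m - j0} : Finset ℕ) ⊆ Finset.range n := by
          intro x hx
          simp only [Finset.mem_insert, Finset.mem_singleton] at hx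
          rcases hx with rfl | rfl | rfl <;> simp only [Finset.mem_range] <;> omega
        have hx := hex j0 {0, t0, m - j0} hsub
        rw [Finset.sum_insert (by
              simp only [Finset.mem_insert, Finset.mem_singleton]; omega),
            Finset.sum_pair (by omega : t0 ≠ m - j0)] at hx
        rw [show ({0, t0, m - j0} : Finset ℕ).card = 3 by
              rw [Finset.card_insert_of_notMem (by
                simp only [Finset.mem_insert, Finset.mem_singleton]; omega),
                Finset.card_pair (by omega : t0 ≠ m - j0)]] at hx
        simp only [Nat.add_zero] at hx
        have h4 := hG1 (j0 + (m - j0))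
        have e : m = j0 + (m - j0) := by omega
        rw [e]
        omega
      have hG8' : ∀ m, W m + W (m+1) = 4 → W m ≤ 2 := fun m hm =>
        factG8 _ _ (hB m) (hB (m+1)) (hT m) hm
      have hA : W j0 + W (j0+1) = 5 := h55.1
      by_cases hA1 : t0 = 1
      · -- t0 = 1
        subst hA1
        have hB5 : W (j0+1) + W (j0+2) = 5 := h55.2
        have e1 := twostep W (k-1) (j0+3) (fun m h1 h2 =>
          htight m (by omega) (by omega) (by omega))
        rw [show j0+3+2*(k-1) = j0+n by omega] at e1
        have e2 : W (j0+2) + W (j0+3) = 4 :=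
          htight (j0+2) (by omega) (by omega) (by omega)
        have hval : W j0 = 2 ∧ W (j0+1) = 3 ∧ W (j0+2) = 2 ∧ W (j0+3) = 2 := by omega
        have hch : ∀ m, j0+2 ≤ m → m ≤ j0+n → W m = 2 := by
          intro m h1 h2
          rcases Nat.even_or_odd (m - (j0+2)) with ⟨l, hl⟩ | ⟨l, hl⟩
          · have := twostep W l (j0+2) (fun m' h1' h2' =>
              htight m' (by omega) (by omega) (by omega))
            rw [show j0+2+2*l = m by omega] at this
            omega
          · have := twostep W l (j0+3) (fun m' h1' h2' =>
              htight m' (by omega) (by omega) (by omega))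
            rw [show j0+3+2*l = m by omega] at this
            omega
        have hpf : ∀ m, j0+2 ≤ m → m < j0+n → PF C m := fun m h1 h2 =>
          factG7 _ _ (hB m) (hB (m+1)) (hT m) (hch m h1 (by omega))
            (hch (m+1) (by omega) (by omega))
        have hpflast := hpf (j0+n-1) (by omega) (by omega)
        have hpf2 := hpf (j0+2) (by omega) (by omega)
        have hCper : C (j0+n) = C j0 := hper j0
        have hrun := altrun C (k-1) (j0+2) (fun m h1 h2 => hpf m h1 (by omega))
        rw [show j0+2+2*(k-1) = j0+n-1 by omega] at hrun
        have hx : C j0 = qA ∨ C j0 = qB := by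
          rw [← hCper]
          rcases hpflast with ⟨e, e'⟩ | ⟨e, e'⟩ <;>
            rw [show j0+n-1+1 = j0+n by omega] at e'
          · exact Or.inr e'
          · exact Or.inl e'
        have hz : C (j0+2) = qA ∨ C (j0+2) = qB := by
          rcases hpf2 with ⟨e, _⟩ | ⟨e, _⟩
          · exact Or.inl e
          · exact Or.inr e
        have hg6 : C j0 = C (j0+2) :=
          factG6 _ _ _ (hB (j0+1)) (hT j0) (hT (j0+1)) hx hz hval.2.1
        rcases hpflast with ⟨e, e'⟩ | ⟨e, e'⟩ <;>
          rw [show j0+n-1+1 = j0+n by omega] at e'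
        · exact qA_ne_qB (by rw [← e, hrun, ← hg6, ← hCper, e'])
        · exact qA_ne_qB (by rw [← e', hCper, hg6, ← hrun, e])
      · by_cases hA2 : t0 = n-1
        · -- t0 = n-1
          subst hA2
          have hB5 : W (j0+(n-1)) + W (j0+n) = 5 := by
            have hh := h55.2
            rw [show j0+(n-1)+1 = j0+n by omega] at hh
            exact hh
          have e1 := twostep W (k-1) (j0+1) (fun m h1 h2 =>
            htight m (by omega) (by omega) (by omega))
          rw [show j0+1+2*(k-1) = j0+(n-2) by omega] at e1
          have e2 : W (j0+(n-2)) + W (j0+(n-2)+1) = 4 :=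
            htight (j0+(n-2)) (by omega) (by omega) (by omega)
          rw [show j0+(n-2)+1 = j0+(n-1) by omega] at e2
          have h12 : W (j0+1) + W (j0+2) = 4 :=
            htight (j0+1) (by omega) (by omega) (by omega)
          have hval : W j0 = 3 ∧ W (j0+1) = 2 ∧ W (j0+2) = 2
              ∧ W (j0+(n-1)) = 2 ∧ W (j0+(n-2)) = 2 := by omega
          have hch : ∀ m, j0+1 ≤ m → m ≤ j0+(n-1) → W m = 2 := by
            intro m h1 h2
            rcases Nat.even_or_odd (m - (j0+1)) with ⟨l, hl⟩ | ⟨l, hl⟩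
            · have := twostep W l (j0+1) (fun m' h1' h2' =>
                htight m' (by omega) (by omega) (by omega))
              rw [show j0+1+2*l = m by omega] at this
              omega
            · have := twostep W l (j0+2) (fun m' h1' h2' =>
                htight m' (by omega) (by omega) (by omega))
              rw [show j0+2+2*l = m by omega] at this
              omega
          have hpf : ∀ m, j0+1 ≤ m → m < j0+(n-1) → PF C m := fun m h1 h2 =>
            factG7 _ _ (hB m) (hB (m+1)) (hT m) (hch m h1 (by omega))
              (hch (m+1) (by omega) (by omega))
          have hpflast := hpf (j0+(n-2)) (by omega) (by omega)
          have hpf1 := hpf (j0+1) (by omega) (by omega)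
          have hCper1 : C (j0+n+1) = C (j0+1) := by
            have hh := hper (j0+1)
            rw [show j0+1+n = j0+n+1 by omega] at hh
            exact hh
          have hT1 : Tt (C (j0+(n-1))) (C (j0+n)) := by
            have hh := hT (j0+(n-1))
            rw [show j0+(n-1)+1 = j0+n by omega] at hh
            exact hh
          have hT2 : Tt (C (j0+n)) (C (j0+n+1)) := hT (j0+n)
          have hx : C (j0+(n-1)) = qA ∨ C (j0+(n-1)) = qB := by
            rcases hpflast with ⟨e, e'⟩ | ⟨e, e'⟩ <;>
              rw [show j0+(n-2)+1 = j0+(n-1) by omega] at e'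
            · exact Or.inr e'
            · exact Or.inl e'
          have hz : C (j0+n+1) = qA ∨ C (j0+n+1) = qB := by
            rw [hCper1]
            rcases hpf1 with ⟨e, _⟩ | ⟨e, _⟩
            · exact Or.inl e
            · exact Or.inr e
          have hy3 : sum4 (C (j0+n)) = 3 := by
            show W (j0+n) = 3; omega
          have hg6 : C (j0+(n-1)) = C (j0+n+1) :=
            factG6 _ _ _ (hB (j0+n)) hT1 hT2 hx hz hy3
          rw [hCper1] at hg6
          have hrun := altrun C (k-1) (j0+1) (fun m h1 h2 => hpf m h1 (by omega))
          rw [show j0+1+2*(k-1) = j0+(n-2) by omega] at hrun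
          rcases hpflast with ⟨e, e'⟩ | ⟨e, e'⟩ <;>
            rw [show j0+(n-2)+1 = j0+(n-1) by omega] at e'
          · exact qA_ne_qB (by rw [← e, hrun, ← hg6, e'])
          · exact qA_ne_qB (by rw [← e', hg6, ← hrun, e])
        · -- now 2 ≤ t0 ≤ n-2, so n ≥ 5
          have hrange : 2 ≤ t0 ∧ t0 ≤ n-2 := by omega
          have hn5 : 5 ≤ n := by omega
          by_cases hA3 : t0 = 2
          · subst hA3
            have h21 : W (j0+1) + W (j0+2) = 4 :=
              htight (j0+1) (by omega) (by omega) (by omega)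
            have hB5 : W (j0+2) + W (j0+3) = 5 := h55.2
            have e1 := twostep W (k-1) (j0+3) (fun m h1 h2 =>
              htight m (by omega) (by omega) (by omega))
            rw [show j0+3+2*(k-1) = j0+n by omega] at e1
            have e2 : W (j0+3) + W (j0+4) = 4 :=
              htight (j0+3) (by omega) (by omega) (by omega)
            have h8 := hG8' (j0+3) e2
            omega
          · by_cases hA4 : t0 = n-2
            · subst hA4
              have e1 := twostep W (k-1) (j0+1) (fun m h1 h2 =>
                htight m (by omega) (by omega) (by omega))
              rw [show j0+1+2*(k-1) = j0+(n-2) by omega] at e1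
              have hB5 : W (j0+(n-2)) + W (j0+(n-2)+1) = 5 := h55.2
              have e2 : W (j0+(n-2)+1) + W (j0+(n-2)+1+1) = 4 :=
                htight (j0+(n-2)+1) (by omega) (by omega) (by omega)
              rw [show j0+(n-2)+1+1 = j0+n by omega] at e2
              have e3 : W (j0+1) + W (j0+2) = 4 :=
                htight (j0+1) (by omega) (by omega) (by omega)
              have h8 := hG8' (j0+1) e3
              omega
            · -- middle : 3 ≤ t0 ≤ n-3
              have hmid : 3 ≤ t0 ∧ t0 ≤ n-3 := by omega
              have hB5 : W (j0+t0) + W (j0+t0+1) = 5 := h55.2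
              rcases Nat.even_or_odd t0 with ⟨l, hl⟩ | ⟨l, hl⟩
              · -- t0 even
                have e1 := twostep W (l-1) (j0+1) (fun m h1 h2 =>
                  htight m (by omega) (by omega) (by omega))
                rw [show j0+1+2*(l-1) = j0+(t0-1) by omega] at e1
                have e2 : W (j0+(t0-1)) + W (j0+(t0-1)+1) = 4 :=
                  htight (j0+(t0-1)) (by omega) (by omega) (by omega)
                rw [show j0+(t0-1)+1 = j0+t0 by omega] at e2
                have e3 := twostep W (k-l) (j0+t0+1) (fun m h1 h2 =>
                  htight m (by omega) (by omega) (by omega))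
                rw [show j0+t0+1+2*(k-l) = j0+n by omega] at e3
                have e4 : W (j0+t0+1) + W (j0+t0+2) = 4 :=
                  htight (j0+t0+1) (by omega) (by omega) (by omega)
                have h8 := hG8' (j0+t0+1) e4
                omega
              · -- t0 odd
                have e1 := twostep W l (j0+1) (fun m h1 h2 =>
                  htight m (by omega) (by omega) (by omega))
                rw [show j0+1+2*l = j0+t0 by omega] at e1
                have e2 : W (j0+1) + W (j0+2) = 4 :=
                  htight (j0+1) (by omega) (by omega) (by omega)
                have h81 := hG8' (j0+1) e2
                have e3 := twostep W (k-l-1) (j0+t0+2) (fun m h1 h2 =>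
                  htight m (by omega) (by omega) (by omega))
                rw [show j0+t0+2+2*(k-l-1) = j0+n by omega] at e3
                have e4 : W (j0+t0+1) + W (j0+t0+2) = 4 :=
                  htight (j0+t0+1) (by omega) (by omega) (by omega)
                omega

lemma zmod_sum {m : ℕ} [NeZero m] (g : ZMod m → ℕ) :
    ∑ i : ZMod m, g i = ∑ k ∈ Finset.range m, g (k : ZMod m) := by
  rw [← Fin.sum_univ_eq_sum_range]
  apply Fintype.sum_bijective (fun (k : Fin m) => ((k : ℕ) : ZMod m)) ?_ _ _ (fun k => rfl) |>.symm
  constructor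
  · intro k1 k2 h
    have h1 := congrArg ZMod.val h
    rwa [ZMod.val_cast_of_lt k1.isLt, ZMod.val_cast_of_lt k2.isLt, Fin.val_inj] at h1
  · intro a
    exact ⟨⟨a.val, a.val_lt⟩, ZMod.natCast_rightInverse a⟩

lemma val_sub_one {n : ℕ} [NeZero n] (j : ZMod n) (hj : j ≠ 0) : (j - 1).val = j.val - 1 := by
  have h1 : j.val ≠ 0 := fun h => hj (by rwa [ZMod.val_eq_zero] at h)
  have h2 : j.val < n := j.val_lt
  have e : j - 1 = ((j.val - 1 : ℕ) : ZMod n) := by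
    conv_lhs => rw [(ZMod.natCast_rightInverse j).symm.trans rfl]
    push_cast [Nat.cast_sub (by omega : 1 ≤ j.val)]; ring
  rw [e, ZMod.val_cast_of_lt (by omega)]

lemma zmod4_sub_one_val : ∀ i : ZMod 4, ((i - 1).val + i.val) % 2 = 1 := by decide

end IDomAux

open IDomAux in
theorem stmt16 (n : ℕ) [NeZero n] (hn : 3 ≤ n) (hno : Odd n) :
    IsLeast (weights 4 n) (2 * n + 2) := by
  have hnn : 0 < n := by omega
  constructor
  · -- membership : explicit construction
    set g : ZMod 4 × ZMod n → ℕ :=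
      fun v => if v.2 = 0 then 1 else if (v.1.val + v.2.val) % 2 = 0 then 1 else 0 with hg
    refine ⟨g, ⟨?_, ?_⟩, ?_⟩
    · intro v; rw [hg]; dsimp only; split_ifs <;> omega
    · intro v hv
      obtain ⟨i, j⟩ := v
      rw [hg] at hv ⊢
      dsimp only at hv ⊢
      by_cases h1 : j = 0
      · rw [if_pos h1] at hv; exact absurd hv one_ne_zero
      by_cases h2 : (i.val + j.val) % 2 = 0
      · rw [if_neg h1, if_pos h2] at hv; exact absurd hv one_ne_zero
      have hiv := zmod4_sub_one_val i
      have hjv : j.val ≠ 0 := fun h => h1 (by rwa [ZMod.val_eq_zero] at h)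
      have hg1 : (if j = 0 then 1 else if ((i-1).val + j.val) % 2 = 0 then 1 else 0) = 1 := by
        rw [if_neg h1, if_pos (by omega)]
      have hg2 : (if j - 1 = 0 then 1 else if (i.val + (j-1).val) % 2 = 0 then 1 else 0) = 1 := by
        by_cases hj1 : j - 1 = 0
        · rw [if_pos hj1]
        · rw [if_neg hj1, if_pos]
          rw [val_sub_one j h1]
          omega
      rw [hg1, hg2]
    · -- total weight is 2n+2
      have h1 : ∀ j : ZMod n, (∑ i : ZMod 4, g (i, j)) = if j = 0 then 4 else 2 := by
        intro j
        by_cases hj : j = 0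
        · rw [if_pos hj]
          rw [hg]
          dsimp only
          simp [hj]
        · rw [if_neg hj]
          have h2 : (∑ i : ZMod 4, g (i, j))
              = ∑ t ∈ Finset.range 4, g ((t : ZMod 4), j) := zmod_sum _
          rw [h2, Finset.sum_range_succ, Finset.sum_range_succ, Finset.sum_range_succ,
            Finset.sum_range_succ, Finset.sum_range_zero, hg]
          dsimp only
          rw [if_neg hj, if_neg hj, if_neg hj, if_neg hj]
          have v0 : ((0 : ℕ) : ZMod 4).val = 0 := by decide
          have v1 : ((1 : ℕ) : ZMod 4).val = 1 := by decide
          have v2 : ((2 : ℕ) : ZMod 4).val = 2 := by decide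
          have v3 : ((3 : ℕ) : ZMod 4).val = 3 := by decide
          rw [v0, v1, v2, v3]
          split_ifs <;> omega
      have h2 : ∑ v : ZMod 4 × ZMod n, g v = ∑ j : ZMod n, ∑ i : ZMod 4, g (i, j) := by
        rw [Fintype.sum_prod_type]
        exact Finset.sum_comm
      rw [h2, Finset.sum_congr rfl (fun j _ => h1 j)]
      have h3 : ∀ j : ZMod n, (if j = 0 then 4 else 2) = 2 + (if j = (0:ZMod n) then 2 else 0) := by
        intro j; split_ifs <;> rfl
      rw [Finset.sum_congr rfl (fun j _ => h3 j), Finset.sum_add_distrib]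
      rw [Finset.sum_ite_eq' Finset.univ (0 : ZMod n) (fun _ => 2)]
      simp only [Finset.sum_const, Finset.card_univ, ZMod.card, smul_eq_mul,
        Finset.mem_univ, if_true]
      ring
  · -- lower bound
    rintro w ⟨f, ⟨hfb, hfd⟩, rfl⟩
    set C : ℕ → T4 := fun j =>
      (f (0, (j : ZMod n)), f (1, (j : ZMod n)), f (2, (j : ZMod n)), f (3, (j : ZMod n)))
      with hC
    have hper : ∀ j, C (j + n) = C j := by
      intro j
      have e : ((j + n : ℕ) : ZMod n) = (j : ZMod n) := by
        push_cast [ZMod.natCast_self]; ring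
      rw [hC]
      dsimp only
      rw [e]
    have hBd : ∀ j, Bd (C j) := fun j => ⟨hfb _, hfb _, hfb _, hfb _⟩
    have hT : ∀ j, Tt (C j) (C (j+1)) := by
      intro j
      have e1 : ((j + 1 : ℕ) : ZMod n) - 1 = (j : ZMod n) := by push_cast; ring
      refine ⟨?_, ?_, ?_, ?_⟩ <;> intro h0
      · have hh := hfd (0, ((j+1 : ℕ) : ZMod n)) h0
        dsimp only at hh
        rw [show ((0:ZMod 4) - 1) = 3 by decide, e1] at hh
        exact hh
      · have hh := hfd (1, ((j+1 : ℕ) : ZMod n)) h0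
        dsimp only at hh
        rw [show ((1:ZMod 4) - 1) = 0 by decide, e1] at hh
        exact hh
      · have hh := hfd (2, ((j+1 : ℕ) : ZMod n)) h0
        dsimp only at hh
        rw [show ((2:ZMod 4) - 1) = 1 by decide, e1] at hh
        exact hh
      · have hh := hfd (3, ((j+1 : ℕ) : ZMod n)) h0
        dsimp only at hh
        rw [show ((3:ZMod 4) - 1) = 2 by decide, e1] at hh
        exact hh
    have hmain := main_lower n hn hno C hper hBd hT
    have hsum : ∑ v : ZMod 4 × ZMod n, f v = ∑ j ∈ Finset.range n, sum4 (C j) := by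
      have h2 : ∑ v : ZMod 4 × ZMod n, f v = ∑ j : ZMod n, ∑ i : ZMod 4, f (i, j) := by
        rw [Fintype.sum_prod_type]
        exact Finset.sum_comm
      have houter : ∑ j : ZMod n, (∑ i : ZMod 4, f (i, j))
          = ∑ k ∈ Finset.range n, ∑ i : ZMod 4, f (i, (k : ZMod n)) :=
        zmod_sum (fun j => ∑ i : ZMod 4, f (i, j))
      rw [h2, houter]
      refine Finset.sum_congr rfl (fun j _ => ?_)
      have hcol : (∑ i : ZMod 4, f (i, (j : ZMod n)))
          = ∑ t ∈ Finset.range 4, f ((t : ZMod 4), (j : ZMod n)) :=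
        zmod_sum (fun i => f (i, (j : ZMod n)))
      rw [hcol, Finset.sum_range_succ, Finset.sum_range_succ, Finset.sum_range_succ,
        Finset.sum_range_succ, Finset.sum_range_zero, hC]
      dsimp only [sum4]
      norm_num
    omega
end

section
/- For integers m, n ≥ 3, there exists a minimum-weight Italian dominating function of the directed Cartesian product C_m □ C_n such that no three consecutive vertices in a row or column (i.e., (i,k),(i+1,k),(i+2,k) or (i,k),(i,k+1),(i,k+2)) are all assigned 0. -/
lemma sum_two_update {α : Type*} [Fintype α] [DecidableEq α] (f : α → ℕ) (a b : α)
    (hab : a ≠ b) (x y : ℕ) :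
    (∑ v, Function.update (Function.update f a x) b y v) + f a + f b
      = (∑ v, f v) + x + y := by
  have hamem : a ∈ Finset.univ.erase b := Finset.mem_erase.mpr ⟨hab, Finset.mem_univ a⟩
  rw [Finset.sum_update_of_mem (Finset.mem_univ b)]
  simp only [Finset.sdiff_singleton_eq_erase]
  rw [Finset.sum_update_of_mem hamem]
  simp only [Finset.sdiff_singleton_eq_erase]
  have h1 : (∑ v, f v) = f b + ∑ v ∈ Finset.univ.erase b, f v :=
    (Finset.add_sum_erase _ f (Finset.mem_univ b)).symm
  have h2 : (∑ v ∈ Finset.univ.erase b, f v)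
      = f a + ∑ v ∈ (Finset.univ.erase b).erase a, f v :=
    (Finset.add_sum_erase _ f hamem).symm
  rw [h1, h2]; ring

lemma swap_lemma {m n : ℕ} [NeZero m] [NeZero n] (f : ZMod m × ZMod n → ℕ)
    (hf : ItalianDF f) (a b : ZMod m × ZMod n) (hab : a ≠ b)
    (hfa : f a = 2) (hfb : f b = 0)
    (hsafe : ∀ v : ZMod m × ZMod n, f v = 0 → v ≠ b →
      (v.1 - 1, v.2) ≠ a ∧ (v.1, v.2 - 1) ≠ a) :
    ∃ g : ZMod m × ZMod n → ℕ, ItalianDF g ∧ (∑ v, g v) = (∑ v, f v) ∧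
      (∑ v, g v * g v) + 2 = ∑ v, f v * f v := by
  classical
  set g := Function.update (Function.update f a 1) b 1 with hg
  have hgval : ∀ v, g v = if v = b then 1 else if v = a then 1 else f v := by
    intro v
    rw [hg, Function.update_apply, Function.update_apply]
  have hmono : ∀ v, v ≠ a → f v ≤ g v := by
    intro v hv
    rw [hgval]
    split_ifs with h1
    · subst h1; omega
    · exact le_refl _
  refine ⟨g, ⟨?_, ?_⟩, ?_, ?_⟩
  · intro v
    rw [hgval]
    split_ifs with h1 h2
    · omega
    · omega
    · exact hf.1 v
  · intro v hv
    have hvb : v ≠ b := by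
      intro e
      rw [hgval, if_pos e] at hv
      omega
    have hva : v ≠ a := by
      intro e
      rw [hgval, if_neg hvb, if_pos e] at hv
      omega
    have hvv : f v = 0 := by
      rw [hgval, if_neg hvb, if_neg hva] at hv
      exact hv
    obtain ⟨hp, hq⟩ := hsafe v hvv hvb
    have hd := hf.2 v hvv
    have m1 := hmono _ hp
    have m2 := hmono _ hq
    omega
  · have hs := sum_two_update f a b hab 1 1
    rw [← hg] at hs
    omega
  · have hsq : (fun v => g v * g v)
        = Function.update (Function.update (fun v => f v * f v) a 1) b 1 := by
      funext v
      rw [hgval, Function.update_apply, Function.update_apply]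
      split_ifs <;> ring
    have hs := sum_two_update (fun v => f v * f v) a b hab 1 1
    rw [← hsq] at hs
    simp only [] at hs
    have : f a * f a = 4 := by rw [hfa]
    have : f b * f b = 0 := by rw [hfb]
    omega

theorem stmt18 (m n : ℕ) [NeZero m] [NeZero n] (hm : 3 ≤ m) (hn : 3 ≤ n) :
    ∃ f : ZMod m × ZMod n → ℕ, ItalianDF f ∧ ∑ v, f v = sInf (weights m n) ∧
      (∀ i : ZMod m, ∀ k : ZMod n,
        ¬ (f (i, k) = 0 ∧ f (i + 1, k) = 0 ∧ f (i + 2, k) = 0)) ∧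
      (∀ i : ZMod m, ∀ k : ZMod n,
        ¬ (f (i, k) = 0 ∧ f (i, k + 1) = 0 ∧ f (i, k + 2) = 0)) := by
  classical
  haveI : Fact (1 < m) := ⟨by omega⟩
  haveI : Fact (1 < n) := ⟨by omega⟩
  have hne : (weights m n).Nonempty := by
    refine ⟨∑ _v : ZMod m × ZMod n, 1, fun _ => 1, ⟨fun v => one_le_two, ?_⟩, rfl⟩
    intro v hv
    simp at hv
  have hWmem : sInf (weights m n) ∈ weights m n := Nat.sInf_mem hne
  set W := sInf (weights m n) with hW
  set T : Set ℕ := {s | ∃ f : ZMod m × ZMod n → ℕ,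
    ItalianDF f ∧ (∑ v, f v) = W ∧ (∑ v, f v * f v) = s} with hT
  have hTne : T.Nonempty := by
    obtain ⟨f, hf, hsum⟩ := hWmem
    exact ⟨_, f, hf, hsum, rfl⟩
  obtain ⟨f, hf, hsum, hsq⟩ := Nat.sInf_mem hTne
  have key : ∀ a b : ZMod m × ZMod n, a ≠ b → f a = 2 → f b = 0 →
      (∀ v : ZMod m × ZMod n, f v = 0 → v ≠ b →
        (v.1 - 1, v.2) ≠ a ∧ (v.1, v.2 - 1) ≠ a) → False := by
    intro a b hab hfa hfb hsafe
    obtain ⟨g, hg, hgsum, hgsq⟩ := swap_lemma f hf a b hab hfa hfb hsafe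
    have hmem : (∑ v, g v * g v) ∈ T := ⟨g, hg, by rw [hgsum, hsum], rfl⟩
    have hle := Nat.sInf_le hmem
    omega
  have h10 : (1 : ZMod m) ≠ 0 := one_ne_zero
  have h10' : (1 : ZMod n) ≠ 0 := one_ne_zero
  refine ⟨f, hf, hsum, ?_, ?_⟩
  · -- row case
    rintro i k ⟨h0, h1, h2⟩
    have e1 : f (i + 1, k - 1) = 2 := by
      have hd := hf.2 (i + 1, k) h1
      have hr : i + 1 - 1 = i := by ring
      simp only [hr] at hd
      have hb := hf.1 (i + 1, k - 1)
      omega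
    have e2 : f (i + 2, k - 1) = 2 := by
      have hd := hf.2 (i + 2, k) h2
      have hr : i + 2 - 1 = i + 1 := by ring
      simp only [hr] at hd
      have hb := hf.1 (i + 2, k - 1)
      omega
    apply key (i + 1, k - 1) (i + 1, k) ?_ e1 h1 ?_
    · intro h
      rw [Prod.mk.injEq] at h
      exact h10' (by linear_combination -h.2)
    · rintro ⟨v1, v2⟩ hv0 hvb
      constructor
      · intro h
        rw [Prod.mk.injEq] at h
        have hv1 : v1 = i + 2 := by linear_combination h.1
        have hv2 : v2 = k - 1 := h.2
        rw [hv1, hv2] at hv0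
        omega
      · intro h
        rw [Prod.mk.injEq] at h
        apply hvb
        rw [Prod.mk.injEq]
        exact ⟨h.1, by linear_combination h.2⟩
  · -- column case
    rintro i k ⟨h0, h1, h2⟩
    have e1 : f (i - 1, k + 1) = 2 := by
      have hd := hf.2 (i, k + 1) h1
      have hr : k + 1 - 1 = k := by ring
      simp only [hr] at hd
      have hb := hf.1 (i - 1, k + 1)
      omega
    have e2 : f (i - 1, k + 2) = 2 := by
      have hd := hf.2 (i, k + 2) h2
      have hr : k + 2 - 1 = k + 1 := by ring
      simp only [hr] at hd
      have hb := hf.1 (i - 1, k + 2)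
      omega
    apply key (i - 1, k + 1) (i, k + 1) ?_ e1 h1 ?_
    · intro h
      rw [Prod.mk.injEq] at h
      exact h10 (by linear_combination -h.1)
    · rintro ⟨v1, v2⟩ hv0 hvb
      constructor
      · intro h
        rw [Prod.mk.injEq] at h
        apply hvb
        rw [Prod.mk.injEq]
        exact ⟨by linear_combination h.1, h.2⟩
      · intro h
        rw [Prod.mk.injEq] at h
        have hv1 : v1 = i - 1 := h.1
        have hv2 : v2 = k + 2 := by linear_combination h.2
        rw [hv1, hv2] at hv0
        omega
end
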